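/- arXiv:1112.3353 — 3 statements merged into one kernel-verified Lean document; each statement's English description precedes it below -/
import Mathlib

section
/- Every finite simple graph admits an EPG representation, i.e., an assignment of finite non-self-intersecting paths in the rectangular planar grid to its vertices such that two distinct vertices are adjacent if and only if their paths share at least one grid edge. -/
/-- A step between two grid points is a unit step (horizontal or vertical). -/
def unitStep (a b : ℤ × ℤ) : Prop :=
  (a.1 = b.1 ∧ (a.2 - b.2).natAbs = 1) ∨ (a.2 = b.2 ∧ (a.1 - b.1).natAbs = 1)

/-- A finite non-self-intersecting (in grid edges) path in the planar grid. -/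
structure GridPath where
  pts : List (ℤ × ℤ)
  nonempty : pts ≠ []
  chain : pts.Chain' unitStep
  edges_nodup : ((pts.zip pts.tail).map fun ab => Sym2.mk ab.1 ab.2).Nodup

/-- The list of steps (consecutive pairs of points) of a grid path. -/
def GridPath.steps (P : GridPath) : List ((ℤ × ℤ) × (ℤ × ℤ)) := P.pts.zip P.pts.tail

/-- The list of grid edges used by a grid path. -/
def GridPath.edges (P : GridPath) : List (Sym2 (ℤ × ℤ)) := P.steps.map fun ab => Sym2.mk ab.1 ab.2

/-- Whether a step is horizontal. -/
def stepHoriz (ab : (ℤ × ℤ) × (ℤ × ℤ)) : Bool := ab.1.2 == ab.2.2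

/-- The number of bends of a grid path: positions where a horizontal edge is followed
by a vertical one or vice versa. -/
def GridPath.bends (P : GridPath) : ℕ :=
  ((P.steps.zip P.steps.tail).filter fun st => stepHoriz st.1 != stepHoriz st.2).length

/-- An EPG representation: distinct vertices are adjacent iff their paths share a grid edge. -/
def IsEPGRep {V : Type*} (G : SimpleGraph V) (P : V → GridPath) : Prop :=
  ∀ u v : V, u ≠ v → (G.Adj u v ↔ ∃ e, e ∈ (P u).edges ∧ e ∈ (P v).edges)

/-- `G` has an EPG representation all of whose paths have at most `k` bends. -/
def HasKBendRep {V : Type*} (G : SimpleGraph V) (k : ℕ) : Prop :=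
  ∃ P : V → GridPath, IsEPGRep G P ∧ ∀ v, (P v).bends ≤ k

/-- The bend-number of a graph. -/
noncomputable def bendNumber {V : Type*} (G : SimpleGraph V) : ℕ :=
  sInf {k | HasKBendRep G k}

namespace EPGaux


lemma map_range_succ {α : Type*} (g : ℕ → α) (M : ℕ) :
    (List.range (M+1)).map g = g 0 :: (List.range M).map (fun i => g (i+1)) := by
  rw [List.range_succ_eq_map, List.map_cons, List.map_map]; rfl

lemma zip_tail_map_range {α : Type*} (f : ℕ → α) (N : ℕ) :
    (((List.range (N+1)).map f).zip ((List.range (N+1)).map f).tail)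
      = (List.range N).map (fun i => (f i, f (i+1))) := by
  induction N generalizing f with
  | zero => simp [List.range_succ]
  | succ N ih =>
    rw [map_range_succ f (N+1), map_range_succ (fun i => f (i+1)) N, List.tail_cons,
      List.zip_cons_cons, map_range_succ (fun i => (f i, f (i+1))) N]
    congr 1
    have := ih (fun i => f (i+1))
    rw [map_range_succ (fun i => f (i+1)) N] at this
    exact this

def ptAt (g : ℕ → ℕ) (t : ℕ) : ℤ × ℤ := ((t : ℤ) - g t, (g t : ℤ))

def stepOK (g : ℕ → ℕ) : Prop := ∀ t, g (t+1) = g t ∨ g (t+1) = g t + 1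

/-- the min of the coordinate sums of the two endpoints of a grid edge -/
noncomputable def edgeTime : Sym2 (ℤ × ℤ) → ℤ :=
  Sym2.lift ⟨fun a b => min (a.1 + a.2) (b.1 + b.2), by intro a b; simp [min_comm]⟩

lemma edgeTime_ptAt (g : ℕ → ℕ) (i : ℕ) :
    edgeTime (Sym2.mk (ptAt g i) (ptAt g (i+1))) = (i : ℤ) := by
  show min ((ptAt g i).1 + (ptAt g i).2) ((ptAt g (i+1)).1 + (ptAt g (i+1)).2) = (i:ℤ)
  simp [ptAt]

noncomputable def pathOf (g : ℕ → ℕ) (N : ℕ) (h : stepOK g) : GridPath where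
  pts := (List.range (N+1)).map (ptAt g)
  nonempty := by simp
  chain := by
    show List.IsChain _ _
    rw [List.isChain_map, List.isChain_range_succ]
    intro i _
    rcases h i with h1 | h1 <;>
      · simp only [unitStep, ptAt, Nat.succ_eq_add_one, h1, true_and]
        omega
  edges_nodup := by
    rw [zip_tail_map_range, List.map_map]
    apply List.Nodup.of_map edgeTime
    rw [List.map_map]
    have : (edgeTime ∘ (fun ab => Sym2.mk ab.1 ab.2) ∘ fun i => (ptAt g i, ptAt g (i+1)))
        = fun i : ℕ => (i : ℤ) := by
      funext i; exact edgeTime_ptAt g i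
    rw [this]
    exact List.Nodup.map (fun a b hab => by exact_mod_cast hab) (List.nodup_range (n := N))

lemma edges_pathOf (g : ℕ → ℕ) (N : ℕ) (h : stepOK g) :
    (pathOf g N h).edges = (List.range N).map (fun i => Sym2.mk (ptAt g i) (ptAt g (i+1))) := by
  show (((List.range (N+1)).map (ptAt g)).zip ((List.range (N+1)).map (ptAt g)).tail).map _ = _
  rw [zip_tail_map_range, List.map_map]
  rfl

lemma shared_iff (g₁ g₂ : ℕ → ℕ) (N : ℕ) (h₁ : stepOK g₁) (h₂ : stepOK g₂) :
    (∃ e, e ∈ (pathOf g₁ N h₁).edges ∧ e ∈ (pathOf g₂ N h₂).edges) ↔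
      ∃ i, i < N ∧ g₁ i = g₂ i ∧ g₁ (i+1) = g₂ (i+1) := by
  rw [edges_pathOf, edges_pathOf]
  constructor
  · rintro ⟨e, he1, he2⟩
    simp only [List.mem_map, List.mem_range] at he1 he2
    obtain ⟨i, hi, rfl⟩ := he1
    obtain ⟨j, hj, hij⟩ := he2
    have ht : (j : ℤ) = i := by
      have := congrArg edgeTime hij
      rw [edgeTime_ptAt, edgeTime_ptAt] at this
      exact this
    have hji : j = i := by exact_mod_cast ht
    subst hji
    rw [Sym2.eq_iff] at hij
    rcases hij with ⟨ha, hb⟩ | ⟨ha, hb⟩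
    · refine ⟨j, hj, ?_, ?_⟩
      · have := congrArg Prod.snd ha; simp [ptAt] at this; exact_mod_cast this.symm
      · have := congrArg Prod.snd hb; simp [ptAt] at this; exact_mod_cast this.symm
    · -- impossible: coordinate sums differ
      exfalso
      have h1 := congrArg (fun p : ℤ × ℤ => p.1 + p.2) ha
      simp only [ptAt] at h1
      omega
  · rintro ⟨i, hi, e1, e2⟩
    refine ⟨Sym2.mk (ptAt g₁ i) (ptAt g₁ (i+1)), ?_, ?_⟩
    · simp only [List.mem_map, List.mem_range]; exact ⟨i, hi, rfl⟩
    · simp only [List.mem_map, List.mem_range]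
      refine ⟨i, hi, ?_⟩
      have p1 : ptAt g₁ i = ptAt g₂ i := by simp [ptAt, e1]
      have p2 : ptAt g₁ (i+1) = ptAt g₂ (i+1) := by simp [ptAt, e2]
      rw [p1, p2]


section comb
variable {V : Type*} [DecidableEq V]

/-- whether `v` is an endpoint of the edge `e` (phrased via `Quot.out`). -/
def inE (e : Sym2 V) (v : V) : Prop := v = e.out.1 ∨ v = e.out.2

noncomputable instance (e : Sym2 V) (v : V) : Decidable (inE e v) := by unfold inE; infer_instance

/-- heights at the start of stage `k` -/
noncomputable def hgt (es : List (Sym2 V)) (idx : V → ℕ) (B : ℕ) : ℕ → V → ℕ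
  | 0, v => idx v
  | (k+1), v =>
    match es[k]? with
    | some e => if v = e.out.1 then (k+1)*B + 1 else if v = e.out.2 then (k+1)*B
                else hgt es idx B k v
    | none => hgt es idx B k v

/-- the height function of vertex `v` at time `t` -/
noncomputable def gg (es : List (Sym2 V)) (idx : V → ℕ) (B T₀ : ℕ) (v : V) (t : ℕ) : ℕ :=
  match es[t / T₀]? with
  | some e => if inE e v then min (hgt es idx B (t / T₀) v + t % T₀) ((t / T₀ + 1) * B)
              else hgt es idx B (t / T₀) v
  | none => hgt es idx B (t / T₀) v

variable (es : List (Sym2 V)) (idx : V → ℕ) (B T₀ : ℕ)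

lemma hgt_lt (hB : ∀ v, idx v + 2 ≤ B) : ∀ k v, hgt es idx B k v < (k+1) * B := by
  intro k
  induction k with
  | zero => intro v; have := hB v; simpa [hgt] using by omega
  | succ k ih =>
    intro v
    have hBv := hB v
    have hmul : (k+1+1)*B = (k+1)*B + B := by ring
    cases hk : es[k]? with
    | none => simp only [hgt, hk]; have := ih v; omega
    | some e =>
      simp only [hgt, hk]
      split_ifs <;> (try omega) <;> (have := ih v; omega)

lemma hgt_ne (hB : ∀ v, idx v + 2 ≤ B) (hinj : Function.Injective idx)
    (hdiag : ∀ e ∈ es, ¬ e.IsDiag) :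
    ∀ k ⦃x y : V⦄, x ≠ y → hgt es idx B k x ≠ hgt es idx B k y := by
  intro k
  induction k with
  | zero => intro x y hxy; simp only [hgt]; exact fun h => hxy (hinj h)
  | succ k ih =>
    intro x y hxy
    cases hk : es[k]? with
    | none => simp only [hgt, hk]; exact ih hxy
    | some e =>
      have he : e ∈ es := by
        rw [List.getElem?_eq_some_iff] at hk
        obtain ⟨h1, h2⟩ := hk
        exact h2 ▸ List.getElem_mem h1
      have hout : e.out.1 ≠ e.out.2 := by
        intro hh
        exact hdiag e he (by rw [← Quot.out_eq e]; exact Sym2.mk_isDiag_iff.2 hh)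
      have hx' := hgt_lt es idx B hB k x
      have hy' := hgt_lt es idx B hB k y
      simp only [hgt, hk]
      split_ifs with h1 h2 h3 h4 h5 <;>
        first
          | (exact absurd (h1 ▸ h3 : (x:V) = y) hxy)
          | omega
          | (subst_vars; first | exact absurd rfl hxy | exact absurd rfl hout
                               | (exact ih hxy) | omega)
          | exact ih hxy


lemma stage_succ (hT : 0 < T₀) (t : ℕ) :
    ((t + 1) % T₀ = 0 ∧ (t+1) / T₀ = t / T₀ + 1 ∧ t % T₀ = T₀ - 1)
  ∨ ((t + 1) % T₀ = t % T₀ + 1 ∧ (t+1) / T₀ = t / T₀) := by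
  have hd := Nat.div_add_mod t T₀
  have hm := Nat.mod_lt t hT
  by_cases hc : t % T₀ + 1 = T₀
  · left
    have hmul : T₀ * (t / T₀ + 1) = T₀ * (t / T₀) + T₀ := by ring
    have h1 : t + 1 = T₀ * (t / T₀ + 1) := by omega
    refine ⟨?_, ?_, by omega⟩
    · rw [h1, Nat.mul_mod_right]
    · rw [h1, Nat.mul_div_cancel_left _ hT]
  · right
    have h1 : t + 1 = T₀ * (t / T₀) + (t % T₀ + 1) := by omega
    have hlt : t % T₀ + 1 < T₀ := by omega
    constructor
    · conv_lhs => rw [h1]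
      rw [Nat.mul_add_mod, Nat.mod_eq_of_lt hlt]
    · conv_lhs => rw [h1]
      rw [Nat.mul_add_div hT, Nat.div_eq_of_lt hlt, Nat.add_zero]

lemma gg_mod_zero (hB : ∀ v, idx v + 2 ≤ B) (v : V) (t : ℕ) (h0 : t % T₀ = 0) :
    gg es idx B T₀ v t = hgt es idx B (t / T₀) v := by
  cases hk : es[t / T₀]? with
  | none => simp only [gg, hk]
  | some e =>
    simp only [gg, hk, h0]
    split_ifs with h1
    · have := hgt_lt es idx B hB (t / T₀) v
      omega
    · rfl

lemma q_lt_of_some {k : ℕ} {e : Sym2 V} (hk : es[k]? = some e) : k < es.length := by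
  rw [List.getElem?_eq_some_iff] at hk; exact hk.1

lemma mem_of_some {k : ℕ} {e : Sym2 V} (hk : es[k]? = some e) : e ∈ es := by
  rw [List.getElem?_eq_some_iff] at hk
  obtain ⟨h1, h2⟩ := hk
  exact h2 ▸ List.getElem_mem h1

lemma gg_stepOK (hB : ∀ v, idx v + 2 ≤ B) (hT : T₀ = es.length * B + 2) (v : V) :
    stepOK (gg es idx B T₀ v) := by
  intro t
  have hT0 : 0 < T₀ := by omega
  rcases stage_succ T₀ hT0 t with ⟨h0, hdiv, hmod⟩ | ⟨hmod, hdiv⟩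
  · -- boundary between stages
    have hb : gg es idx B T₀ v (t+1) = hgt es idx B (t / T₀ + 1) v := by
      rw [gg_mod_zero es idx B T₀ hB v (t+1) h0, hdiv]
    rw [hb]
    cases hk : es[t / T₀]? with
    | none =>
      left
      simp only [gg, hk, hgt]
    | some e =>
      have hq : t / T₀ < es.length := q_lt_of_some es hk
      have hBv := hB v
      have hup : (t / T₀ + 1) * B ≤ es.length * B := Nat.mul_le_mul_right B (by omega)
      have hgv := hgt_lt es idx B hB (t / T₀) v
      have hsucc : hgt es idx B (t / T₀ + 1) v
          = if v = e.out.1 then (t / T₀ + 1)*B + 1 else if v = e.out.2 then (t / T₀ + 1)*B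
            else hgt es idx B (t / T₀) v := by
        simp only [hgt, hk]
      rw [hsucc]
      by_cases h1 : v = e.out.1
      · have hin : inE e v := Or.inl h1
        simp only [gg, hk, if_pos hin, if_pos h1]
        omega
      · by_cases h2 : v = e.out.2
        · have hin : inE e v := Or.inr h2
          simp only [gg, hk, if_pos hin, if_neg h1, if_pos h2]
          omega
        · have hnin : ¬ inE e v := by rintro (h | h); exacts [h1 h, h2 h]
          simp only [gg, hk, if_neg hnin, if_neg h1, if_neg h2]
          left; trivial
  · -- within a stage
    have hg1 : gg es idx B T₀ v (t+1)
        = match es[t / T₀]? with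
          | some e => if inE e v then
              min (hgt es idx B (t / T₀) v + (t % T₀ + 1)) ((t / T₀ + 1) * B)
              else hgt es idx B (t / T₀) v
          | none => hgt es idx B (t / T₀) v := by
      simp only [gg, hdiv, hmod]
    rw [hg1]
    cases hk : es[t / T₀]? with
    | none => simp only [gg, hk]; left; trivial
    | some e =>
      simp only [gg, hk]
      by_cases h1 : inE e v
      · rw [if_pos h1, if_pos h1]; omega
      · rw [if_neg h1, if_neg h1]; left; trivial


lemma eq_mk_of_inE {e : Sym2 V} {x y : V} (hx : inE e x) (hy : inE e y) (hxy : x ≠ y) :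
    e = Sym2.mk x y := by
  have hout : Sym2.mk e.out.1 e.out.2 = e := Quot.out_eq e
  rcases hx with hx | hx <;> rcases hy with hy | hy
  · exact absurd (hx.trans hy.symm) hxy
  · rw [← hout, hx, hy]
  · rw [← hout, hx, hy, Sym2.eq_swap]
  · exact absurd (hx.trans hy.symm) hxy

lemma inE_mk (x y : V) : inE (Sym2.mk x y) x ∧ inE (Sym2.mk x y) y := by
  have hout : Sym2.mk (Sym2.mk x y).out.1 (Sym2.mk x y).out.2 = Sym2.mk x y :=
    Quot.out_eq _
  rw [Sym2.eq_iff] at hout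
  unfold inE
  rcases hout with ⟨h1, h2⟩ | ⟨h1, h2⟩
  · exact ⟨Or.inl h1.symm, Or.inr h2.symm⟩
  · exact ⟨Or.inr h2.symm, Or.inl h1.symm⟩

lemma main_iff (hB : ∀ v, idx v + 2 ≤ B) (hinj : Function.Injective idx)
    (hT : T₀ = es.length * B + 2)
    (G : SimpleGraph V) (hmem : ∀ e, e ∈ es ↔ e ∈ G.edgeSet)
    {x y : V} (hxy : x ≠ y) :
    G.Adj x y ↔ ∃ i, i < es.length * T₀ ∧
      gg es idx B T₀ x i = gg es idx B T₀ y i ∧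
      gg es idx B T₀ x (i+1) = gg es idx B T₀ y (i+1) := by
  have hdiag : ∀ e ∈ es, ¬ e.IsDiag := fun e he =>
    G.not_isDiag_of_mem_edgeSet ((hmem e).1 he)
  have hBx := hB x
  have hT0 : 0 < T₀ := by omega
  constructor
  · intro hadj
    have hmem' : Sym2.mk x y ∈ es := (hmem _).2 hadj
    obtain ⟨k, hk, hke⟩ := List.mem_iff_getElem.1 hmem'
    have hksome : es[k]? = some (Sym2.mk x y) := by
      rw [List.getElem?_eq_getElem hk, hke]
    have hTe : k * T₀ + (T₀ - 2) = T₀ * k + (T₀ - 2) := by ring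
    have hTe1 : k * T₀ + (T₀ - 2) + 1 = T₀ * k + (T₀ - 1) := by omega
    have hdiv : (k * T₀ + (T₀ - 2)) / T₀ = k := by
      rw [hTe, Nat.mul_add_div hT0, Nat.div_eq_of_lt (by omega), Nat.add_zero]
    have hmod : (k * T₀ + (T₀ - 2)) % T₀ = T₀ - 2 := by
      rw [hTe, Nat.mul_add_mod, Nat.mod_eq_of_lt (by omega)]
    have hdiv1 : (k * T₀ + (T₀ - 2) + 1) / T₀ = k := by
      rw [hTe1, Nat.mul_add_div hT0, Nat.div_eq_of_lt (by omega), Nat.add_zero]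
    have hmod1 : (k * T₀ + (T₀ - 2) + 1) % T₀ = T₀ - 1 := by
      rw [hTe1, Nat.mul_add_mod, Nat.mod_eq_of_lt (by omega)]
    have hval : ∀ (v : V) (t : ℕ), inE (Sym2.mk x y) v → t / T₀ = k →
        T₀ - 2 ≤ t % T₀ → gg es idx B T₀ v t = (k+1) * B := by
      intro v t hv hd hm
      have hgv := hgt_lt es idx B hB k v
      have hup : (k+1) * B ≤ es.length * B := Nat.mul_le_mul_right B (by omega)
      simp only [gg, hd, hksome, if_pos hv]
      omega
    obtain ⟨hex, hey⟩ := inE_mk x y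
    refine ⟨k * T₀ + (T₀ - 2), ?_, ?_, ?_⟩
    · have h1 : (k+1) * T₀ ≤ es.length * T₀ := Nat.mul_le_mul_right T₀ (by omega)
      have h2 : (k+1) * T₀ = k * T₀ + T₀ := by ring
      omega
    · rw [hval x _ hex hdiv (by omega), hval y _ hey hdiv (by omega)]
    · rw [hval x _ hex hdiv1 (by omega), hval y _ hey hdiv1 (by omega)]
  · rintro ⟨i, hi, hA, hB'⟩
    have hq : i / T₀ < es.length := (Nat.div_lt_iff_lt_mul hT0).2 (by omega)
    have hke : es[i / T₀]? = some (es[i / T₀]'hq) := List.getElem?_eq_getElem hq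
    set e := es[i / T₀]'hq with hedef
    rcases stage_succ T₀ hT0 i with ⟨h0, hdiv, hmod⟩ | ⟨hmod, hdiv⟩
    · exfalso
      have e1 := gg_mod_zero es idx B T₀ hB x (i+1) h0
      have e2 := gg_mod_zero es idx B T₀ hB y (i+1) h0
      exact hgt_ne es idx B hB hinj hdiag ((i+1)/T₀) hxy (by rw [← e1, ← e2, hB'])
    · have hglt := hgt_lt es idx B hB (i / T₀)
      by_cases hx : inE e x <;> by_cases hy : inE e y
      · have hee : e ∈ G.edgeSet := (hmem e).1 (mem_of_some es hke)
        rw [eq_mk_of_inE hx hy hxy] at hee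
        exact (SimpleGraph.mem_edgeSet G).1 hee
      · exfalso
        have g1 : gg es idx B T₀ y i = hgt es idx B (i / T₀) y := by
          simp only [gg, hke, if_neg hy]
        have g2 : gg es idx B T₀ y (i+1) = hgt es idx B (i / T₀) y := by
          simp only [gg, hdiv, hke, if_neg hy]
        have g3 : gg es idx B T₀ x i
            = min (hgt es idx B (i / T₀) x + i % T₀) ((i / T₀ + 1) * B) := by
          simp only [gg, hke, if_pos hx]
        have g4 : gg es idx B T₀ x (i+1)
            = min (hgt es idx B (i / T₀) x + (i % T₀ + 1)) ((i / T₀ + 1) * B) := by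
          simp only [gg, hdiv, hmod, hke, if_pos hx]
        have := hglt y
        omega
      · exfalso
        have g1 : gg es idx B T₀ x i = hgt es idx B (i / T₀) x := by
          simp only [gg, hke, if_neg hx]
        have g2 : gg es idx B T₀ x (i+1) = hgt es idx B (i / T₀) x := by
          simp only [gg, hdiv, hke, if_neg hx]
        have g3 : gg es idx B T₀ y i
            = min (hgt es idx B (i / T₀) y + i % T₀) ((i / T₀ + 1) * B) := by
          simp only [gg, hke, if_pos hy]
        have g4 : gg es idx B T₀ y (i+1)
            = min (hgt es idx B (i / T₀) y + (i % T₀ + 1)) ((i / T₀ + 1) * B) := by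
          simp only [gg, hdiv, hmod, hke, if_pos hy]
        have := hglt x
        omega
      · exfalso
        have g1 : gg es idx B T₀ x i = hgt es idx B (i / T₀) x := by
          simp only [gg, hke, if_neg hx]
        have g2 : gg es idx B T₀ y i = hgt es idx B (i / T₀) y := by
          simp only [gg, hke, if_neg hy]
        exact hgt_ne es idx B hB hinj hdiag (i / T₀) hxy (by rw [← g1, ← g2, hA])

end comb
end EPGaux

set_option maxHeartbeats 1000000 in
/-- Every finite simple graph admits an EPG representation. -/
theorem every_finite_graph_has_EPG_representation
    {V : Type*} [Fintype V] (G : SimpleGraph V) :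
    ∃ P : V → GridPath, IsEPGRep G P := by
  classical
  set es : List (Sym2 V) := G.edgeFinset.toList with hes
  set idx : V → ℕ := fun v => ((Fintype.equivFin V) v : ℕ) with hidx
  set B : ℕ := Fintype.card V + 2 with hBdef
  set T₀ : ℕ := es.length * B + 2 with hTdef
  have hB : ∀ v, idx v + 2 ≤ B := fun v => by
    have := ((Fintype.equivFin V) v).isLt
    simp only [hidx, hBdef]
    omega
  have hinj : Function.Injective idx := fun a b h => by
    apply (Fintype.equivFin V).injective
    exact Fin.ext h
  have hT : T₀ = es.length * B + 2 := rfl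
  have hmem : ∀ e, e ∈ es ↔ e ∈ G.edgeSet := fun e => by
    rw [hes, Finset.mem_toList, SimpleGraph.mem_edgeFinset]
  have hstep : ∀ v, EPGaux.stepOK (EPGaux.gg es idx B T₀ v) :=
    fun v => EPGaux.gg_stepOK es idx B T₀ hB hT v
  refine ⟨fun v => EPGaux.pathOf (EPGaux.gg es idx B T₀ v) (es.length * T₀) (hstep v), ?_⟩
  intro u v huv
  rw [EPGaux.shared_iff]
  exact EPGaux.main_iff es idx B T₀ hB hinj hT G hmem huv
end

section
/- For every n ≥ 5, the complete bipartite graph K_{2,n} has bend-number exactly 2. -/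
def smk (ab : (ℤ × ℤ) × (ℤ × ℤ)) : Sym2 (ℤ × ℤ) := Sym2.mk ab.1 ab.2

def hOv (p q p' q' : ℤ) : Prop := p < q ∧ p' < q' ∧ p < q' ∧ p' < q
def Valid (c d p q r s : ℤ) : Prop := p ≤ q ∧ r ≤ s ∧ (d = p ∨ d = q) ∧ (c = r ∨ c = s)
def Meets (c1 d1 p1 q1 r1 s1 c2 d2 p2 q2 r2 s2 : ℤ) : Prop :=
  (c1 = c2 ∧ hOv p1 q1 p2 q2) ∨ (d1 = d2 ∧ hOv r1 s1 r2 s2)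

def hEdge (x c : ℤ) : Sym2 (ℤ × ℤ) := s((x, c), (x+1, c))
def vEdge (d y : ℤ) : Sym2 (ℤ × ℤ) := s((d, y), (d, y+1))

lemma hEdge_inj {x c x' c' : ℤ} : hEdge x c = hEdge x' c' ↔ x = x' ∧ c = c' := by
  constructor
  · intro h
    rw [hEdge, hEdge, Sym2.eq_iff] at h
    rcases h with ⟨h1, h2⟩ | ⟨h1, h2⟩ <;>
      rw [Prod.ext_iff] at h1 h2 <;> simp at h1 h2 <;> omega
  · rintro ⟨rfl, rfl⟩; rfl

lemma vEdge_inj {d y d' y' : ℤ} : vEdge d y = vEdge d' y' ↔ d = d' ∧ y = y' := by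
  constructor
  · intro h
    rw [vEdge, vEdge, Sym2.eq_iff] at h
    rcases h with ⟨h1, h2⟩ | ⟨h1, h2⟩ <;>
      rw [Prod.ext_iff] at h1 h2 <;> simp at h1 h2 <;> omega
  · rintro ⟨rfl, rfl⟩; rfl

lemma hEdge_ne_vEdge {x c d y : ℤ} : hEdge x c ≠ vEdge d y := by
  intro h
  rw [hEdge, vEdge, Sym2.eq_iff] at h
  rcases h with ⟨h1, h2⟩ | ⟨h1, h2⟩ <;>
    rw [Prod.ext_iff] at h1 h2 <;> simp at h1 h2 <;> omega

def DescOf (P : GridPath) (c d p q r s : ℤ) : Prop :=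
  Valid c d p q r s ∧
  ∀ e, e ∈ P.edges ↔ (∃ x, p ≤ x ∧ x < q ∧ e = hEdge x c) ∨ (∃ y, r ≤ y ∧ y < s ∧ e = vEdge d y)

lemma meets_iff {P₁ P₂ : GridPath} {c1 d1 p1 q1 r1 s1 c2 d2 p2 q2 r2 s2 : ℤ}
    (h₁ : DescOf P₁ c1 d1 p1 q1 r1 s1) (h₂ : DescOf P₂ c2 d2 p2 q2 r2 s2) :
    (∃ e, e ∈ P₁.edges ∧ e ∈ P₂.edges) ↔ Meets c1 d1 p1 q1 r1 s1 c2 d2 p2 q2 r2 s2 := by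
  constructor
  · rintro ⟨e, he1, he2⟩
    rw [(h₁.2 e)] at he1; rw [(h₂.2 e)] at he2
    rcases he1 with ⟨x, hx1, hx2, rfl⟩ | ⟨y, hy1, hy2, rfl⟩ <;>
      rcases he2 with ⟨x', hx1', hx2', he⟩ | ⟨y', hy1', hy2', he⟩
    · rw [hEdge_inj] at he
      exact Or.inl ⟨he.2, by unfold hOv; omega⟩
    · exact absurd he hEdge_ne_vEdge
    · exact absurd he.symm hEdge_ne_vEdge
    · rw [vEdge_inj] at he
      exact Or.inr ⟨he.1, by unfold hOv; omega⟩
  · rintro (⟨hc, hov⟩ | ⟨hd, hov⟩)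
    · obtain ⟨o1, o2, o3, o4⟩ := hov
      refine ⟨hEdge (max p1 p2) c1, ?_, ?_⟩
      · exact (h₁.2 _).mpr (Or.inl ⟨max p1 p2, by omega, by omega, rfl⟩)
      · exact (h₂.2 _).mpr (Or.inl ⟨max p1 p2, by omega, by omega, by rw [hc]⟩)
    · obtain ⟨o1, o2, o3, o4⟩ := hov
      refine ⟨vEdge d1 (max r1 r2), ?_, ?_⟩
      · exact (h₁.2 _).mpr (Or.inr ⟨max r1 r2, by omega, by omega, rfl⟩)
      · exact (h₂.2 _).mpr (Or.inr ⟨max r1 r2, by omega, by omega, by rw [hd]⟩)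

section runs

lemma chain'_zip_rel {α : Type*} {R : α → α → Prop} :
    ∀ (l : List α), l.Chain' R → ∀ p ∈ l.zip l.tail, R p.1 p.2
  | [] => by intro _ p hp; simp at hp
  | [a] => by intro _ p hp; simp at hp
  | a :: b :: t => by
      intro h p hp
      rw [List.Chain', List.isChain_cons_cons] at h
      simp only [List.tail_cons, List.zip_cons_cons, List.mem_cons] at hp
      rcases hp with rfl | hp'
      · exact h.1
      · exact chain'_zip_rel (b :: t) h.2 p hp'

lemma link_chain : ∀ (l : List (ℤ × ℤ)), (l.zip l.tail).Chain' (fun s t => s.2 = t.1)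
  | [] => by simp [List.Chain']
  | [a] => by simp [List.Chain']
  | a :: b :: t => by
      have ih := link_chain (b :: t)
      cases t with
      | nil => simp [List.Chain']
      | cons c t' =>
          simp only [List.tail_cons, List.zip_cons_cons] at ih ⊢
          exact List.isChain_cons_cons.mpr ⟨rfl, ih⟩

lemma alt0 {α : Type*} (f : α → Bool) :
    ∀ (a : α) (l : List α), (((a :: l).zip l).filter (fun st => f st.1 != f st.2)).length = 0 →
      ∀ x ∈ l, f x = f a
  | a, [] => by intro _ x hx; simp at hx
  | a, b :: t => by
      intro h x hx
      simp only [List.zip_cons_cons, List.filter_cons] at h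
      by_cases hfab : (f a != f b) = true
      · rw [if_pos hfab] at h; simp at h
      · rw [if_neg hfab] at h
        have hab : f a = f b := by revert hfab; cases f a <;> cases f b <;> simp
        rcases List.mem_cons.mp hx with rfl | hx'
        · exact hab.symm
        · exact (alt0 f b t h x hx').trans hab.symm

lemma altsplit {α : Type*} (f : α → Bool) :
    ∀ (l : List α), ((l.zip l.tail).filter (fun st => f st.1 != f st.2)).length ≤ 1 →
      ∃ l1 l2 b, l = l1 ++ l2 ∧ (∀ x ∈ l1, f x = b) ∧ (∀ x ∈ l2, f x = !b)
  | [] => fun _ => ⟨[], [], true, rfl, by simp, by simp⟩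
  | [a] => fun _ => ⟨[a], [], f a, rfl, by simp, by simp⟩
  | a :: b :: t => by
      intro h
      simp only [List.tail_cons, List.zip_cons_cons, List.filter_cons] at h
      by_cases hfab : (f a != f b) = true
      · rw [if_pos hfab] at h
        simp only [List.length_cons] at h
        have h0 : (((b :: t).zip t).filter (fun st => f st.1 != f st.2)).length = 0 := by omega
        have hall := alt0 f b t h0
        refine ⟨[a], b :: t, f a, rfl, by simp, ?_⟩
        intro x hx
        have hne : f b = !(f a) := by revert hfab; cases f a <;> cases f b <;> simp
        rcases List.mem_cons.mp hx with rfl | hx'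
        · exact hne
        · exact (hall x hx').trans hne
      · rw [if_neg hfab] at h
        obtain ⟨l1, l2, bb, hsplit, h1, h2⟩ := altsplit f (b :: t) h
        have hab : f a = f b := by revert hfab; cases f a <;> cases f b <;> simp
        cases l1 with
        | nil =>
            refine ⟨[], a :: l2, bb, by simpa using congrArg (a :: ·) hsplit, by simp, ?_⟩
            intro x hx
            have hbmem : b ∈ l2 := by
              have : b ∈ ([] : List α) ++ l2 := hsplit ▸ List.mem_cons_self (a := b) (l := t)
              simpa using this
            rcases List.mem_cons.mp hx with rfl | hx'
            · exact hab.trans (h2 b hbmem)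
            · exact h2 x hx'
        | cons z l1' =>
            have hz : z = b := by
              have := congrArg List.head? hsplit
              simpa using this.symm
            subst hz
            refine ⟨a :: z :: l1', l2, bb, by simpa using congrArg (a :: ·) hsplit, ?_, h2⟩
            intro x hx
            rcases List.mem_cons.mp hx with rfl | hx'
            · exact hab.trans (h1 z (List.mem_cons_self))
            · exact h1 x hx'

end runs


lemma mk_eq_hEdge (u : (ℤ × ℤ) × (ℤ × ℤ)) (h : u.1.2 = u.2.2) (h2 : (u.1.1 - u.2.1).natAbs = 1) :
    smk u = hEdge (min u.1.1 u.2.1) u.1.2 := by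
  obtain ⟨⟨ux, uy⟩, ⟨vx, vy⟩⟩ := u
  simp only at h h2 ⊢
  subst h
  rcases (by omega : vx = ux + 1 ∨ ux = vx + 1) with h3 | h3
  · subst h3
    rw [min_eq_left (by omega)]
    rfl
  · subst h3
    rw [min_eq_right (by omega)]
    exact Sym2.eq_swap

lemma mk_eq_vEdge (u : (ℤ × ℤ) × (ℤ × ℤ)) (h : u.1.1 = u.2.1) (h2 : (u.1.2 - u.2.2).natAbs = 1) :
    smk u = vEdge u.1.1 (min u.1.2 u.2.2) := by
  obtain ⟨⟨ux, uy⟩, ⟨vx, vy⟩⟩ := u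
  simp only at h h2 ⊢
  subst h
  rcases (by omega : vy = uy + 1 ∨ uy = vy + 1) with h3 | h3
  · subst h3
    rw [min_eq_left (by omega)]
    rfl
  · subst h3
    rw [min_eq_right (by omega)]
    exact Sym2.eq_swap

lemma hRun : ∀ (t : List ((ℤ × ℤ) × (ℤ × ℤ))) (s0 z : (ℤ × ℤ) × (ℤ × ℤ)),
    (s0 :: t).getLast? = some z →
    (s0 :: t).Chain' (fun u v => u.2 = v.1) →
    (∀ u ∈ s0 :: t, u.1.2 = u.2.2 ∧ (u.1.1 - u.2.1).natAbs = 1) →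
    ((s0 :: t).map smk).Nodup →
    z.2.2 = s0.1.2 ∧
    ∀ e, e ∈ (s0 :: t).map smk ↔
      ∃ x, min s0.1.1 z.2.1 ≤ x ∧ x < max s0.1.1 z.2.1 ∧ e = hEdge x s0.1.2
  | [], s0, z => by
      intro hz _ hu _
      have hz' : z = s0 := by simpa using hz.symm
      subst hz'
      obtain ⟨h1, h2⟩ := hu z (List.mem_cons_self)
      refine ⟨h1.symm, ?_⟩
      intro e
      simp only [List.map_cons, List.map_nil, List.mem_singleton]
      constructor
      · rintro rfl
        exact ⟨min z.1.1 z.2.1, le_refl _, by omega, mk_eq_hEdge z h1 h2⟩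
      · rintro ⟨x, hx1, hx2, rfl⟩
        have hx : x = min z.1.1 z.2.1 := by omega
        rw [hx, ← mk_eq_hEdge z h1 h2]
  | s1 :: t', s0, z => by
      intro hz hch hu hnd
      rw [List.getLast?_cons_cons] at hz
      rw [List.Chain', List.isChain_cons_cons] at hch
      obtain ⟨hlink, hch'⟩ := hch
      obtain ⟨hnotin, hnd'⟩ := List.nodup_cons.mp hnd
      obtain ⟨hline, hiff⟩ :=
        hRun t' s1 z hz hch' (fun u hu' => hu u (List.mem_cons_of_mem _ hu')) hnd'
      obtain ⟨ha1, ha2⟩ := hu s0 (List.mem_cons_self)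
      have hs1 : s1.1 = s0.2 := hlink.symm
      have hl2 : s1.1.2 = s0.1.2 := by rw [hs1, ← ha1]
      have hB : s1.1.1 = s0.2.1 := by rw [hs1]
      have hmk : smk s0 = hEdge (min s0.1.1 s0.2.1) s0.1.2 := mk_eq_hEdge s0 ha1 ha2
      refine ⟨hline.trans hl2, ?_⟩
      have hdir : s0.2.1 = s0.1.1 + 1 ∨ s0.1.1 = s0.2.1 + 1 := by omega
      intro e
      rw [List.map_cons, List.mem_cons, hiff e]
      rcases hdir with hd | hd
      · -- going right; show s0.2.1 ≤ z.2.1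
        have hZ : s0.2.1 ≤ z.2.1 := by
          by_contra hcon
          push_neg at hcon
          apply hnotin
          rw [hiff]
          refine ⟨s0.1.1, ?_, ?_, ?_⟩
          · rw [hB]; omega
          · rw [hB]; omega
          · rw [hmk, hEdge_inj]
            exact ⟨by omega, hl2.symm⟩
        constructor
        · rintro (h | ⟨x, hx1, hx2, he⟩)
          · refine ⟨s0.1.1, by omega, by omega, ?_⟩
            rw [h, hmk, min_eq_left (by omega)]
          · rw [hB] at hx1 hx2
            exact ⟨x, by omega, by omega, by rw [he, hl2]⟩
        · rintro ⟨x, hx1, hx2, he⟩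
          by_cases hxA : x = s0.1.1
          · left
            rw [he, hxA, hmk, min_eq_left (by omega)]
          · right
            refine ⟨x, ?_, ?_, by rw [he, hl2]⟩
            · rw [hB]; omega
            · rw [hB]; omega
      · -- going left; show z.2.1 ≤ s0.2.1
        have hZ : z.2.1 ≤ s0.2.1 := by
          by_contra hcon
          push_neg at hcon
          apply hnotin
          rw [hiff]
          refine ⟨s0.2.1, ?_, ?_, ?_⟩
          · rw [hB]; omega
          · rw [hB]; omega
          · rw [hmk, hEdge_inj]
            exact ⟨by omega, hl2.symm⟩
        constructor
        · rintro (h | ⟨x, hx1, hx2, he⟩)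
          · refine ⟨s0.2.1, by omega, by omega, ?_⟩
            rw [h, hmk, min_eq_right (by omega)]
          · rw [hB] at hx1 hx2
            exact ⟨x, by omega, by omega, by rw [he, hl2]⟩
        · rintro ⟨x, hx1, hx2, he⟩
          by_cases hxA : x = s0.2.1
          · left
            rw [he, hxA, hmk, min_eq_right (by omega)]
          · right
            refine ⟨x, ?_, ?_, by rw [he, hl2]⟩
            · rw [hB]; omega
            · rw [hB]; omega

lemma vRun : ∀ (t : List ((ℤ × ℤ) × (ℤ × ℤ))) (s0 z : (ℤ × ℤ) × (ℤ × ℤ)),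
    (s0 :: t).getLast? = some z →
    (s0 :: t).Chain' (fun u v => u.2 = v.1) →
    (∀ u ∈ s0 :: t, u.1.1 = u.2.1 ∧ (u.1.2 - u.2.2).natAbs = 1) →
    ((s0 :: t).map smk).Nodup →
    z.2.1 = s0.1.1 ∧
    ∀ e, e ∈ (s0 :: t).map smk ↔
      ∃ y, min s0.1.2 z.2.2 ≤ y ∧ y < max s0.1.2 z.2.2 ∧ e = vEdge s0.1.1 y
  | [], s0, z => by
      intro hz _ hu _
      have hz' : z = s0 := by simpa using hz.symm
      subst hz'
      obtain ⟨h1, h2⟩ := hu z (List.mem_cons_self)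
      refine ⟨h1.symm, ?_⟩
      intro e
      simp only [List.map_cons, List.map_nil, List.mem_singleton]
      constructor
      · rintro rfl
        exact ⟨min z.1.2 z.2.2, le_refl _, by omega, mk_eq_vEdge z h1 h2⟩
      · rintro ⟨y, hy1, hy2, rfl⟩
        have hy : y = min z.1.2 z.2.2 := by omega
        rw [hy, ← mk_eq_vEdge z h1 h2]
  | s1 :: t', s0, z => by
      intro hz hch hu hnd
      rw [List.getLast?_cons_cons] at hz
      rw [List.Chain', List.isChain_cons_cons] at hch
      obtain ⟨hlink, hch'⟩ := hch
      obtain ⟨hnotin, hnd'⟩ := List.nodup_cons.mp hnd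
      obtain ⟨hline, hiff⟩ :=
        vRun t' s1 z hz hch' (fun u hu' => hu u (List.mem_cons_of_mem _ hu')) hnd'
      obtain ⟨ha1, ha2⟩ := hu s0 (List.mem_cons_self)
      have hs1 : s1.1 = s0.2 := hlink.symm
      have hl2 : s1.1.1 = s0.1.1 := by rw [hs1, ← ha1]
      have hB : s1.1.2 = s0.2.2 := by rw [hs1]
      have hmk : smk s0 = vEdge s0.1.1 (min s0.1.2 s0.2.2) := mk_eq_vEdge s0 ha1 ha2
      refine ⟨hline.trans hl2, ?_⟩
      have hdir : s0.2.2 = s0.1.2 + 1 ∨ s0.1.2 = s0.2.2 + 1 := by omega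
      intro e
      rw [List.map_cons, List.mem_cons, hiff e]
      rcases hdir with hd | hd
      · have hZ : s0.2.2 ≤ z.2.2 := by
          by_contra hcon
          push_neg at hcon
          apply hnotin
          rw [hiff]
          refine ⟨s0.1.2, ?_, ?_, ?_⟩
          · rw [hB]; omega
          · rw [hB]; omega
          · rw [hmk, vEdge_inj]
            exact ⟨hl2.symm, by omega⟩
        constructor
        · rintro (h | ⟨y, hy1, hy2, he⟩)
          · refine ⟨s0.1.2, by omega, by omega, ?_⟩
            rw [h, hmk, min_eq_left (by omega)]
          · rw [hB] at hy1 hy2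
            exact ⟨y, by omega, by omega, by rw [he, hl2]⟩
        · rintro ⟨y, hy1, hy2, he⟩
          by_cases hyA : y = s0.1.2
          · left
            rw [he, hyA, hmk, min_eq_left (by omega)]
          · right
            refine ⟨y, ?_, ?_, by rw [he, hl2]⟩
            · rw [hB]; omega
            · rw [hB]; omega
      · have hZ : z.2.2 ≤ s0.2.2 := by
          by_contra hcon
          push_neg at hcon
          apply hnotin
          rw [hiff]
          refine ⟨s0.2.2, ?_, ?_, ?_⟩
          · rw [hB]; omega
          · rw [hB]; omega
          · rw [hmk, vEdge_inj]
            exact ⟨hl2.symm, by omega⟩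
        constructor
        · rintro (h | ⟨y, hy1, hy2, he⟩)
          · refine ⟨s0.2.2, by omega, by omega, ?_⟩
            rw [h, hmk, min_eq_right (by omega)]
          · rw [hB] at hy1 hy2
            exact ⟨y, by omega, by omega, by rw [he, hl2]⟩
        · rintro ⟨y, hy1, hy2, he⟩
          by_cases hyA : y = s0.2.2
          · left
            rw [he, hyA, hmk, min_eq_right (by omega)]
          · right
            refine ⟨y, ?_, ?_, by rw [he, hl2]⟩
            · rw [hB]; omega
            · rw [hB]; omega


lemma conv_horiz {u : (ℤ × ℤ) × (ℤ × ℤ)} (hu : unitStep u.1 u.2) (hh : stepHoriz u = true) :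
    u.1.2 = u.2.2 ∧ (u.1.1 - u.2.1).natAbs = 1 := by
  have h2 : u.1.2 = u.2.2 := by simpa [stepHoriz] using hh
  rcases hu with ⟨h3, h4⟩ | ⟨h3, h4⟩
  · exfalso; omega
  · exact ⟨h2, h4⟩

lemma conv_vert {u : (ℤ × ℤ) × (ℤ × ℤ)} (hu : unitStep u.1 u.2) (hh : stepHoriz u = false) :
    u.1.1 = u.2.1 ∧ (u.1.2 - u.2.2).natAbs = 1 := by
  have h2 : ¬ (u.1.2 = u.2.2) := by simpa [stepHoriz] using hh
  rcases hu with ⟨h3, h4⟩ | ⟨h3, h4⟩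
  · exact ⟨h3, h4⟩
  · exact absurd h3 h2

lemma descOf_exists (P : GridPath) (h : P.bends ≤ 1) : ∃ c d p q r s, DescOf P c d p q r s := by
  have hstep : ∀ u ∈ P.pts.zip P.pts.tail, unitStep u.1 u.2 := chain'_zip_rel P.pts P.chain
  have hlink := link_chain P.pts
  have hnd : ((P.pts.zip P.pts.tail).map smk).Nodup := P.edges_nodup
  obtain ⟨l1, l2, b, hsplit, hb1, hb2⟩ := altsplit stepHoriz (P.pts.zip P.pts.tail) h
  have hedges : P.edges = (l1 ++ l2).map smk := by
    rw [GridPath.edges, GridPath.steps, hsplit]; rfl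
  rw [hsplit] at hlink hnd hstep
  rw [List.Chain', List.isChain_append] at hlink
  obtain ⟨hc1, hc2, hconn⟩ := hlink
  rw [List.map_append, List.nodup_append] at hnd
  obtain ⟨hnd1, hnd2, _⟩ := hnd
  cases b
  case false =>
    -- l1 vertical, l2 horizontal
    cases l1 with
    | nil =>
      cases l2 with
      | nil =>
        refine ⟨0, 0, 0, 0, 0, 0, ⟨le_refl _, le_refl _, Or.inl rfl, Or.inl rfl⟩, ?_⟩
        intro e
        rw [hedges]
        exact iff_of_false (by simp) (by rintro (⟨x, h1, h2, _⟩ | ⟨y, h1, h2, _⟩) <;> omega)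
      | cons u0 t2 =>
        obtain ⟨z2, hz2⟩ : ∃ z2, (u0 :: t2).getLast? = some z2 :=
          ⟨_, List.getLast?_eq_getLast (by simp)⟩
        have hstep2 : ∀ u ∈ u0 :: t2, u.1.2 = u.2.2 ∧ (u.1.1 - u.2.1).natAbs = 1 := fun u hu =>
          conv_horiz (hstep u (List.mem_append_right _ hu)) (by simpa using hb2 u hu)
        obtain ⟨hline2, hiff2⟩ := hRun t2 u0 z2 hz2 hc2 hstep2 hnd2
        refine ⟨u0.1.2, min u0.1.1 z2.2.1, min u0.1.1 z2.2.1, max u0.1.1 z2.2.1,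
          u0.1.2, u0.1.2, ⟨by omega, le_refl _, Or.inl rfl, Or.inl rfl⟩, ?_⟩
        intro e
        rw [hedges, List.nil_append, hiff2 e]
        constructor
        · exact fun hx => Or.inl hx
        · rintro (hx | ⟨y, h1, h2, _⟩)
          · exact hx
          · omega
    | cons s0 t =>
      obtain ⟨z1, hz1⟩ : ∃ z1, (s0 :: t).getLast? = some z1 :=
        ⟨_, List.getLast?_eq_getLast (by simp)⟩
      have hstep1 : ∀ u ∈ s0 :: t, u.1.1 = u.2.1 ∧ (u.1.2 - u.2.2).natAbs = 1 := fun u hu =>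
        conv_vert (hstep u (List.mem_append_left _ hu)) (by simpa using hb1 u hu)
      obtain ⟨hline1, hiff1⟩ := vRun t s0 z1 hz1 hc1 hstep1 hnd1
      cases l2 with
      | nil =>
        refine ⟨min s0.1.2 z1.2.2, s0.1.1, s0.1.1, s0.1.1, min s0.1.2 z1.2.2, max s0.1.2 z1.2.2,
          ⟨le_refl _, by omega, Or.inl rfl, Or.inl rfl⟩, ?_⟩
        intro e
        rw [hedges, List.append_nil, hiff1 e]
        constructor
        · exact fun hx => Or.inr hx
        · rintro (⟨x, h1, h2, _⟩ | hx)
          · omega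
          · exact hx
      | cons u0 t2 =>
        obtain ⟨z2, hz2⟩ : ∃ z2, (u0 :: t2).getLast? = some z2 :=
          ⟨_, List.getLast?_eq_getLast (by simp)⟩
        have hstep2 : ∀ u ∈ u0 :: t2, u.1.2 = u.2.2 ∧ (u.1.1 - u.2.1).natAbs = 1 := fun u hu =>
          conv_horiz (hstep u (List.mem_append_right _ hu)) (by simpa using hb2 u hu)
        obtain ⟨hline2, hiff2⟩ := hRun t2 u0 z2 hz2 hc2 hstep2 hnd2
        have hcz : z1.2 = u0.1 := hconn z1 (Option.mem_def.mpr hz1) u0 rfl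
        have hd1 : u0.1.1 = s0.1.1 := by rw [← hline1, ← hcz]
        have hc1' : u0.1.2 = z1.2.2 := by rw [hcz]
        refine ⟨u0.1.2, s0.1.1, min u0.1.1 z2.2.1, max u0.1.1 z2.2.1,
          min s0.1.2 z1.2.2, max s0.1.2 z1.2.2,
          ⟨by omega, by omega, by omega, by omega⟩, ?_⟩
        intro e
        rw [hedges, List.map_append, List.mem_append, hiff1 e, hiff2 e, hd1]
        exact or_comm
  case true =>
    -- l1 horizontal, l2 vertical
    cases l1 with
    | nil =>
      cases l2 with
      | nil =>
        refine ⟨0, 0, 0, 0, 0, 0, ⟨le_refl _, le_refl _, Or.inl rfl, Or.inl rfl⟩, ?_⟩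
        intro e
        rw [hedges]
        exact iff_of_false (by simp) (by rintro (⟨x, h1, h2, _⟩ | ⟨y, h1, h2, _⟩) <;> omega)
      | cons u0 t2 =>
        obtain ⟨z2, hz2⟩ : ∃ z2, (u0 :: t2).getLast? = some z2 :=
          ⟨_, List.getLast?_eq_getLast (by simp)⟩
        have hstep2 : ∀ u ∈ u0 :: t2, u.1.1 = u.2.1 ∧ (u.1.2 - u.2.2).natAbs = 1 := fun u hu =>
          conv_vert (hstep u (List.mem_append_right _ hu)) (by simpa using hb2 u hu)
        obtain ⟨hline2, hiff2⟩ := vRun t2 u0 z2 hz2 hc2 hstep2 hnd2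
        refine ⟨min u0.1.2 z2.2.2, u0.1.1, u0.1.1, u0.1.1, min u0.1.2 z2.2.2, max u0.1.2 z2.2.2,
          ⟨le_refl _, by omega, Or.inl rfl, Or.inl rfl⟩, ?_⟩
        intro e
        rw [hedges, List.nil_append, hiff2 e]
        constructor
        · exact fun hx => Or.inr hx
        · rintro (⟨x, h1, h2, _⟩ | hx)
          · omega
          · exact hx
    | cons s0 t =>
      obtain ⟨z1, hz1⟩ : ∃ z1, (s0 :: t).getLast? = some z1 :=
        ⟨_, List.getLast?_eq_getLast (by simp)⟩
      have hstep1 : ∀ u ∈ s0 :: t, u.1.2 = u.2.2 ∧ (u.1.1 - u.2.1).natAbs = 1 := fun u hu =>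
        conv_horiz (hstep u (List.mem_append_left _ hu)) (by simpa using hb1 u hu)
      obtain ⟨hline1, hiff1⟩ := hRun t s0 z1 hz1 hc1 hstep1 hnd1
      cases l2 with
      | nil =>
        refine ⟨s0.1.2, min s0.1.1 z1.2.1, min s0.1.1 z1.2.1, max s0.1.1 z1.2.1,
          s0.1.2, s0.1.2, ⟨by omega, le_refl _, Or.inl rfl, Or.inl rfl⟩, ?_⟩
        intro e
        rw [hedges, List.append_nil, hiff1 e]
        constructor
        · exact fun hx => Or.inl hx
        · rintro (hx | ⟨y, h1, h2, _⟩)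
          · exact hx
          · omega
      | cons u0 t2 =>
        obtain ⟨z2, hz2⟩ : ∃ z2, (u0 :: t2).getLast? = some z2 :=
          ⟨_, List.getLast?_eq_getLast (by simp)⟩
        have hstep2 : ∀ u ∈ u0 :: t2, u.1.1 = u.2.1 ∧ (u.1.2 - u.2.2).natAbs = 1 := fun u hu =>
          conv_vert (hstep u (List.mem_append_right _ hu)) (by simpa using hb2 u hu)
        obtain ⟨hline2, hiff2⟩ := vRun t2 u0 z2 hz2 hc2 hstep2 hnd2
        have hcz : z1.2 = u0.1 := hconn z1 (Option.mem_def.mpr hz1) u0 rfl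
        have hd1 : u0.1.1 = z1.2.1 := by rw [hcz]
        have hc1' : u0.1.2 = s0.1.2 := by rw [← hline1, ← hcz]
        refine ⟨s0.1.2, u0.1.1, min s0.1.1 z1.2.1, max s0.1.1 z1.2.1,
          min u0.1.2 z2.2.2, max u0.1.2 z2.2.2,
          ⟨by omega, by omega, by omega, by omega⟩, ?_⟩
        intro e
        rw [hedges, List.map_append, List.mem_append, hiff1 e, hiff2 e]


def hseg (x0 c : ℤ) : ℕ → List (ℤ × ℤ)
  | 0 => [(x0, c)]
  | m+1 => (x0, c) :: hseg (x0+1) c m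

lemma hseg_ne_nil {x0 c : ℤ} {m : ℕ} : hseg x0 c m ≠ [] := by cases m <;> simp [hseg]

lemma hseg_head (x0 c : ℤ) (m : ℕ) : (hseg x0 c m).head? = some (x0, c) := by
  cases m <;> rfl

lemma hseg_steps (m : ℕ) (x0 c : ℤ) : (hseg x0 c (m+1)).zip (hseg x0 c (m+1)).tail =
    ((x0, c), (x0+1, c)) :: ((hseg (x0+1) c m).zip (hseg (x0+1) c m).tail) := by
  cases m <;> rfl

lemma hseg_spec (c : ℤ) : ∀ (m : ℕ) (x0 : ℤ),
    (hseg x0 c m).Chain' unitStep ∧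
    (((hseg x0 c m).zip (hseg x0 c m).tail).map smk).Nodup ∧
    (∀ u ∈ (hseg x0 c m).zip (hseg x0 c m).tail, stepHoriz u = true) ∧
    (∀ e, e ∈ ((hseg x0 c m).zip (hseg x0 c m).tail).map smk ↔
      ∃ x, x0 ≤ x ∧ x < x0 + m ∧ e = hEdge x c)
  | 0, x0 => by
      refine ⟨by simp [hseg, List.Chain'], by simp [hseg], by simp [hseg], ?_⟩
      intro e
      refine iff_of_false (by simp [hseg]) ?_
      rintro ⟨x, h1, h2, _⟩
      simp at h2
      omega
  | m+1, x0 => by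
      obtain ⟨ih1, ih2, ih3, ih4⟩ := hseg_spec c m (x0+1)
      have hst := hseg_steps m x0 c
      refine ⟨?_, ?_, ?_, ?_⟩
      · rw [show hseg x0 c (m+1) = (x0, c) :: hseg (x0+1) c m from rfl, List.Chain', List.isChain_cons]
        refine ⟨?_, ih1⟩
        intro y hy
        rw [hseg_head] at hy
        have : y = (x0+1, c) := by simpa using hy.symm
        subst this
        exact Or.inr ⟨rfl, by simp⟩
      · rw [hst, List.map_cons, List.nodup_cons]
        refine ⟨?_, ih2⟩
        intro hmem
        rw [ih4] at hmem
        obtain ⟨x, h1, h2, he⟩ := hmem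
        have := hEdge_inj.mp he.symm
        omega
      · intro u hu
        rw [hst] at hu
        rcases List.mem_cons.mp hu with rfl | hu'
        · simp [stepHoriz]
        · exact ih3 u hu'
      · intro e
        rw [hst, List.map_cons, List.mem_cons, ih4 e]
        constructor
        · rintro (h | ⟨x, h1, h2, he⟩)
          · exact ⟨x0, le_refl _, by push_cast; omega, h⟩
          · exact ⟨x, by omega, by push_cast at h2 ⊢; omega, he⟩
        · rintro ⟨x, h1, h2, he⟩
          by_cases hx : x = x0
          · subst hx
            exact Or.inl he
          · refine Or.inr ⟨x, by omega, by push_cast at h2 ⊢; omega, he⟩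

def segPathH (x0 c : ℤ) (m : ℕ) : GridPath :=
  ⟨hseg x0 c m, hseg_ne_nil, (hseg_spec c m x0).1, (hseg_spec c m x0).2.1⟩

lemma segPathH_edges (x0 c : ℤ) (m : ℕ) :
    ∀ e, e ∈ (segPathH x0 c m).edges ↔ ∃ x, x0 ≤ x ∧ x < x0 + m ∧ e = hEdge x c :=
  (hseg_spec c m x0).2.2.2

lemma segPathH_bends (x0 c : ℤ) (m : ℕ) : (segPathH x0 c m).bends = 0 := by
  rw [GridPath.bends, List.length_eq_zero_iff, List.filter_eq_nil_iff]
  intro st hst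
  have h1 : st.1 ∈ (segPathH x0 c m).steps ∧ st.2 ∈ (segPathH x0 c m).steps.tail :=
    List.of_mem_zip hst
  have ht1 := (hseg_spec c m x0).2.2.1 st.1 h1.1
  have ht2 := (hseg_spec c m x0).2.2.1 st.2 (List.mem_of_mem_tail h1.2)
  simp [ht1, ht2]

def midPath (i : ℤ) : GridPath where
  pts := [(2*i, 0), (2*i+1, 0), (2*i+1, 1), (2*i, 1)]
  nonempty := by simp
  chain := by
    refine List.isChain_cons_cons.mpr ⟨Or.inr ⟨rfl, by simp⟩,
      List.isChain_cons_cons.mpr ⟨Or.inl ⟨rfl, by simp⟩,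
      List.isChain_cons_cons.mpr ⟨Or.inr ⟨rfl, by simp⟩, List.isChain_singleton _⟩⟩⟩
  edges_nodup := by
    show (List.map smk
      [((2*i,(0:ℤ)), ((2*i+1 : ℤ),(0:ℤ))), (((2*i+1:ℤ),(0:ℤ)), ((2*i+1:ℤ),(1:ℤ))),
       (((2*i+1:ℤ),(1:ℤ)), ((2*i:ℤ),(1:ℤ)))]).Nodup
    rw [List.map_cons, List.map_cons, List.map_cons, List.map_nil]
    have e3 : (smk (((2*i+1:ℤ),(1:ℤ)), ((2*i:ℤ),(1:ℤ)))) = hEdge (2*i) 1 := Sym2.eq_swap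
    rw [e3]
    show ([hEdge (2*i) 0, vEdge (2*i+1) 0, hEdge (2*i) 1] : List _).Nodup
    have h12 : hEdge (2*i) 0 ≠ vEdge (2*i+1) 0 := hEdge_ne_vEdge
    have h13 : hEdge (2*i) 0 ≠ hEdge (2*i) 1 := fun h => by have := hEdge_inj.mp h; omega
    have h23 : vEdge (2*i+1) 0 ≠ hEdge (2*i) 1 := fun h => hEdge_ne_vEdge h.symm
    simp [List.nodup_cons, h12, h13, h23]

lemma midPath_edges (i : ℤ) :
    (midPath i).edges = [hEdge (2*i) 0, vEdge (2*i+1) 0, hEdge (2*i) 1] := by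
  show [smk ((2*i,(0:ℤ)), ((2*i+1 : ℤ),(0:ℤ))), smk (((2*i+1:ℤ),(0:ℤ)), ((2*i+1:ℤ),(1:ℤ))),
    smk (((2*i+1:ℤ),(1:ℤ)), ((2*i:ℤ),(1:ℤ)))] = _
  rw [show (smk (((2*i+1:ℤ),(1:ℤ)), ((2*i:ℤ),(1:ℤ)))) = hEdge (2*i) 1 from Sym2.eq_swap]
  rfl

lemma midPath_bends (i : ℤ) : (midPath i).bends ≤ 2 := by
  exact le_trans (List.length_filter_le _ _) (Nat.le_of_eq rfl)


section caps
variable {ca da pa qa ra sa cb db pb qb rb sb : ℤ}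
variable {c1 d1 p1 q1 r1 s1 c2 d2 p2 q2 r2 s2 c3 d3 p3 q3 r3 s3 : ℤ}

/-- three HV-type middle vertices are impossible -/
theorem capHV3
    (V1 : Valid c1 d1 p1 q1 r1 s1) (V2 : Valid c2 d2 p2 q2 r2 s2) (V3 : Valid c3 d3 p3 q3 r3 s3)
    (A1 : c1 = ca ∧ hOv p1 q1 pa qa) (B1 : d1 = db ∧ hOv r1 s1 rb sb)
    (A2 : c2 = ca ∧ hOv p2 q2 pa qa) (B2 : d2 = db ∧ hOv r2 s2 rb sb)
    (A3 : c3 = ca ∧ hOv p3 q3 pa qa) (B3 : d3 = db ∧ hOv r3 s3 rb sb)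
    (h12 : ¬ Meets c1 d1 p1 q1 r1 s1 c2 d2 p2 q2 r2 s2)
    (h13 : ¬ Meets c1 d1 p1 q1 r1 s1 c3 d3 p3 q3 r3 s3)
    (h23 : ¬ Meets c2 d2 p2 q2 r2 s2 c3 d3 p3 q3 r3 s3) : False := by
  simp only [Valid, Meets, hOv, not_or, not_and] at *
  omega

/-- three VH-type middle vertices are impossible -/
theorem capVH3
    (V1 : Valid c1 d1 p1 q1 r1 s1) (V2 : Valid c2 d2 p2 q2 r2 s2) (V3 : Valid c3 d3 p3 q3 r3 s3)
    (A1 : d1 = da ∧ hOv r1 s1 ra sa) (B1 : c1 = cb ∧ hOv p1 q1 pb qb)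
    (A2 : d2 = da ∧ hOv r2 s2 ra sa) (B2 : c2 = cb ∧ hOv p2 q2 pb qb)
    (A3 : d3 = da ∧ hOv r3 s3 ra sa) (B3 : c3 = cb ∧ hOv p3 q3 pb qb)
    (h12 : ¬ Meets c1 d1 p1 q1 r1 s1 c2 d2 p2 q2 r2 s2)
    (h13 : ¬ Meets c1 d1 p1 q1 r1 s1 c3 d3 p3 q3 r3 s3)
    (h23 : ¬ Meets c2 d2 p2 q2 r2 s2 c3 d3 p3 q3 r3 s3) : False := by
  simp only [Valid, Meets, hOv, not_or, not_and] at *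
  omega

theorem capHH2 (Va : Valid ca da pa qa ra sa) (Vb : Valid cb db pb qb rb sb)
    (hab : ¬ Meets ca da pa qa ra sa cb db pb qb rb sb) (E : ca = cb ∨ da = db) (V1 : Valid c1 d1 p1 q1 r1 s1) (V2 : Valid c2 d2 p2 q2 r2 s2)
    (A1 : c1 = ca ∧ hOv p1 q1 pa qa) (B1 : c1 = cb ∧ hOv p1 q1 pb qb)
    (A2 : c2 = ca ∧ hOv p2 q2 pa qa) (B2 : c2 = cb ∧ hOv p2 q2 pb qb)
    (h12 : ¬ Meets c1 d1 p1 q1 r1 s1 c2 d2 p2 q2 r2 s2) : False := by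
  simp only [Valid, Meets, hOv, not_or, not_and] at *
  omega

theorem capVV2 (Va : Valid ca da pa qa ra sa) (Vb : Valid cb db pb qb rb sb)
    (hab : ¬ Meets ca da pa qa ra sa cb db pb qb rb sb) (E : ca = cb ∨ da = db)
    (V1 : Valid c1 d1 p1 q1 r1 s1) (V2 : Valid c2 d2 p2 q2 r2 s2)
    (A1 : d1 = da ∧ hOv r1 s1 ra sa) (B1 : d1 = db ∧ hOv r1 s1 rb sb)
    (A2 : d2 = da ∧ hOv r2 s2 ra sa) (B2 : d2 = db ∧ hOv r2 s2 rb sb)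
    (h12 : ¬ Meets c1 d1 p1 q1 r1 s1 c2 d2 p2 q2 r2 s2) : False := by
  simp only [Valid, Meets, hOv, not_or, not_and] at *
  omega

theorem pairHV2 (Va : Valid ca da pa qa ra sa) (Vb : Valid cb db pb qb rb sb)
    (hab : ¬ Meets ca da pa qa ra sa cb db pb qb rb sb) (E : ca = cb ∨ da = db)
    (V1 : Valid c1 d1 p1 q1 r1 s1) (V2 : Valid c2 d2 p2 q2 r2 s2)
    (A1 : c1 = ca ∧ hOv p1 q1 pa qa) (B1 : d1 = db ∧ hOv r1 s1 rb sb)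
    (A2 : c2 = ca ∧ hOv p2 q2 pa qa) (B2 : d2 = db ∧ hOv r2 s2 rb sb)
    (h12 : ¬ Meets c1 d1 p1 q1 r1 s1 c2 d2 p2 q2 r2 s2) : False := by
  simp only [Valid, Meets, hOv, not_or, not_and] at *
  omega

theorem pairVH2 (Va : Valid ca da pa qa ra sa) (Vb : Valid cb db pb qb rb sb)
    (hab : ¬ Meets ca da pa qa ra sa cb db pb qb rb sb) (E : ca = cb ∨ da = db)
    (V1 : Valid c1 d1 p1 q1 r1 s1) (V2 : Valid c2 d2 p2 q2 r2 s2)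
    (A1 : d1 = da ∧ hOv r1 s1 ra sa) (B1 : c1 = cb ∧ hOv p1 q1 pb qb)
    (A2 : d2 = da ∧ hOv r2 s2 ra sa) (B2 : c2 = cb ∧ hOv p2 q2 pb qb)
    (h12 : ¬ Meets c1 d1 p1 q1 r1 s1 c2 d2 p2 q2 r2 s2) : False := by
  simp only [Valid, Meets, hOv, not_or, not_and] at *
  omega

end caps

set_option maxHeartbeats 8000000 in
theorem core
  {ca da pa qa ra sa cb db pb qb rb sb : ℤ}
  {c1 d1 p1 q1 r1 s1 c2 d2 p2 q2 r2 s2 c3 d3 p3 q3 r3 s3 c4 d4 p4 q4 r4 s4 c5 d5 p5 q5 r5 s5 : ℤ}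
  (Va : Valid ca da pa qa ra sa) (Vb : Valid cb db pb qb rb sb)
  (V1 : Valid c1 d1 p1 q1 r1 s1)
  (V2 : Valid c2 d2 p2 q2 r2 s2)
  (V3 : Valid c3 d3 p3 q3 r3 s3)
  (V4 : Valid c4 d4 p4 q4 r4 s4)
  (V5 : Valid c5 d5 p5 q5 r5 s5)
  (hab : ¬ Meets ca da pa qa ra sa cb db pb qb rb sb)
  (h1a : Meets c1 d1 p1 q1 r1 s1 ca da pa qa ra sa)
  (h1b : Meets c1 d1 p1 q1 r1 s1 cb db pb qb rb sb)
  (h2a : Meets c2 d2 p2 q2 r2 s2 ca da pa qa ra sa)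
  (h2b : Meets c2 d2 p2 q2 r2 s2 cb db pb qb rb sb)
  (h3a : Meets c3 d3 p3 q3 r3 s3 ca da pa qa ra sa)
  (h3b : Meets c3 d3 p3 q3 r3 s3 cb db pb qb rb sb)
  (h4a : Meets c4 d4 p4 q4 r4 s4 ca da pa qa ra sa)
  (h4b : Meets c4 d4 p4 q4 r4 s4 cb db pb qb rb sb)
  (h5a : Meets c5 d5 p5 q5 r5 s5 ca da pa qa ra sa)
  (h5b : Meets c5 d5 p5 q5 r5 s5 cb db pb qb rb sb)
  (h12 : ¬ Meets c1 d1 p1 q1 r1 s1 c2 d2 p2 q2 r2 s2)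
  (h13 : ¬ Meets c1 d1 p1 q1 r1 s1 c3 d3 p3 q3 r3 s3)
  (h14 : ¬ Meets c1 d1 p1 q1 r1 s1 c4 d4 p4 q4 r4 s4)
  (h15 : ¬ Meets c1 d1 p1 q1 r1 s1 c5 d5 p5 q5 r5 s5)
  (h23 : ¬ Meets c2 d2 p2 q2 r2 s2 c3 d3 p3 q3 r3 s3)
  (h24 : ¬ Meets c2 d2 p2 q2 r2 s2 c4 d4 p4 q4 r4 s4)
  (h25 : ¬ Meets c2 d2 p2 q2 r2 s2 c5 d5 p5 q5 r5 s5)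
  (h34 : ¬ Meets c3 d3 p3 q3 r3 s3 c4 d4 p4 q4 r4 s4)
  (h35 : ¬ Meets c3 d3 p3 q3 r3 s3 c5 d5 p5 q5 r5 s5)
  (h45 : ¬ Meets c4 d4 p4 q4 r4 s4 c5 d5 p5 q5 r5 s5)
  : False := by
  have E : ca = cb ∨ da = db := by
    by_contra hE
    rw [not_or] at hE
    obtain ⟨hE1, hE2⟩ := hE
    have T1 : ((c1 = ca ∧ hOv p1 q1 pa qa) ∧ (d1 = db ∧ hOv r1 s1 rb sb)) ∨ ((d1 = da ∧ hOv r1 s1 ra sa) ∧ (c1 = cb ∧ hOv p1 q1 pb qb)) := by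
      rcases h1a with h | h
      · rcases h1b with h' | h'
        · exact absurd (h.1.symm.trans h'.1) hE1
        · exact Or.inl ⟨h, h'⟩
      · rcases h1b with h' | h'
        · exact Or.inr ⟨h, h'⟩
        · exact absurd (h.1.symm.trans h'.1) hE2
    have T2 : ((c2 = ca ∧ hOv p2 q2 pa qa) ∧ (d2 = db ∧ hOv r2 s2 rb sb)) ∨ ((d2 = da ∧ hOv r2 s2 ra sa) ∧ (c2 = cb ∧ hOv p2 q2 pb qb)) := by
      rcases h2a with h | h
      · rcases h2b with h' | h'
        · exact absurd (h.1.symm.trans h'.1) hE1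
        · exact Or.inl ⟨h, h'⟩
      · rcases h2b with h' | h'
        · exact Or.inr ⟨h, h'⟩
        · exact absurd (h.1.symm.trans h'.1) hE2
    have T3 : ((c3 = ca ∧ hOv p3 q3 pa qa) ∧ (d3 = db ∧ hOv r3 s3 rb sb)) ∨ ((d3 = da ∧ hOv r3 s3 ra sa) ∧ (c3 = cb ∧ hOv p3 q3 pb qb)) := by
      rcases h3a with h | h
      · rcases h3b with h' | h'
        · exact absurd (h.1.symm.trans h'.1) hE1
        · exact Or.inl ⟨h, h'⟩
      · rcases h3b with h' | h'
        · exact Or.inr ⟨h, h'⟩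
        · exact absurd (h.1.symm.trans h'.1) hE2
    have T4 : ((c4 = ca ∧ hOv p4 q4 pa qa) ∧ (d4 = db ∧ hOv r4 s4 rb sb)) ∨ ((d4 = da ∧ hOv r4 s4 ra sa) ∧ (c4 = cb ∧ hOv p4 q4 pb qb)) := by
      rcases h4a with h | h
      · rcases h4b with h' | h'
        · exact absurd (h.1.symm.trans h'.1) hE1
        · exact Or.inl ⟨h, h'⟩
      · rcases h4b with h' | h'
        · exact Or.inr ⟨h, h'⟩
        · exact absurd (h.1.symm.trans h'.1) hE2
    have T5 : ((c5 = ca ∧ hOv p5 q5 pa qa) ∧ (d5 = db ∧ hOv r5 s5 rb sb)) ∨ ((d5 = da ∧ hOv r5 s5 ra sa) ∧ (c5 = cb ∧ hOv p5 q5 pb qb)) := by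
      rcases h5a with h | h
      · rcases h5b with h' | h'
        · exact absurd (h.1.symm.trans h'.1) hE1
        · exact Or.inl ⟨h, h'⟩
      · rcases h5b with h' | h'
        · exact Or.inr ⟨h, h'⟩
        · exact absurd (h.1.symm.trans h'.1) hE2
    rcases T1 with ⟨A1,B1⟩|⟨A1,B1⟩ <;> rcases T2 with ⟨A2,B2⟩|⟨A2,B2⟩ <;> rcases T3 with ⟨A3,B3⟩|⟨A3,B3⟩ <;> rcases T4 with ⟨A4,B4⟩|⟨A4,B4⟩ <;> rcases T5 with ⟨A5,B5⟩|⟨A5,B5⟩ <;>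
      first
        | exact capHV3 V1 V2 V3 A1 B1 A2 B2 A3 B3 h12 h13 h23
        | exact capVH3 V1 V2 V3 A1 B1 A2 B2 A3 B3 h12 h13 h23
        | exact capHV3 V1 V2 V4 A1 B1 A2 B2 A4 B4 h12 h14 h24
        | exact capVH3 V1 V2 V4 A1 B1 A2 B2 A4 B4 h12 h14 h24
        | exact capHV3 V1 V2 V5 A1 B1 A2 B2 A5 B5 h12 h15 h25
        | exact capVH3 V1 V2 V5 A1 B1 A2 B2 A5 B5 h12 h15 h25
        | exact capHV3 V1 V3 V4 A1 B1 A3 B3 A4 B4 h13 h14 h34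
        | exact capVH3 V1 V3 V4 A1 B1 A3 B3 A4 B4 h13 h14 h34
        | exact capHV3 V1 V3 V5 A1 B1 A3 B3 A5 B5 h13 h15 h35
        | exact capVH3 V1 V3 V5 A1 B1 A3 B3 A5 B5 h13 h15 h35
        | exact capHV3 V1 V4 V5 A1 B1 A4 B4 A5 B5 h14 h15 h45
        | exact capVH3 V1 V4 V5 A1 B1 A4 B4 A5 B5 h14 h15 h45
        | exact capHV3 V2 V3 V4 A2 B2 A3 B3 A4 B4 h23 h24 h34
        | exact capVH3 V2 V3 V4 A2 B2 A3 B3 A4 B4 h23 h24 h34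
        | exact capHV3 V2 V3 V5 A2 B2 A3 B3 A5 B5 h23 h25 h35
        | exact capVH3 V2 V3 V5 A2 B2 A3 B3 A5 B5 h23 h25 h35
        | exact capHV3 V2 V4 V5 A2 B2 A4 B4 A5 B5 h24 h25 h45
        | exact capVH3 V2 V4 V5 A2 B2 A4 B4 A5 B5 h24 h25 h45
        | exact capHV3 V3 V4 V5 A3 B3 A4 B4 A5 B5 h34 h35 h45
        | exact capVH3 V3 V4 V5 A3 B3 A4 B4 A5 B5 h34 h35 h45
  rcases h1a with A1|A1 <;> rcases h1b with B1|B1 <;> rcases h2a with A2|A2 <;> rcases h2b with B2|B2 <;> rcases h3a with A3|A3 <;> rcases h3b with B3|B3 <;> rcases h4a with A4|A4 <;> rcases h4b with B4|B4 <;> rcases h5a with A5|A5 <;> rcases h5b with B5|B5 <;>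
    first
      | exact capHH2 Va Vb hab E V1 V2 A1 B1 A2 B2 h12
      | exact capVV2 Va Vb hab E V1 V2 A1 B1 A2 B2 h12
      | exact pairHV2 Va Vb hab E V1 V2 A1 B1 A2 B2 h12
      | exact pairVH2 Va Vb hab E V1 V2 A1 B1 A2 B2 h12
      | exact capHH2 Va Vb hab E V1 V3 A1 B1 A3 B3 h13
      | exact capVV2 Va Vb hab E V1 V3 A1 B1 A3 B3 h13
      | exact pairHV2 Va Vb hab E V1 V3 A1 B1 A3 B3 h13
      | exact pairVH2 Va Vb hab E V1 V3 A1 B1 A3 B3 h13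
      | exact capHH2 Va Vb hab E V1 V4 A1 B1 A4 B4 h14
      | exact capVV2 Va Vb hab E V1 V4 A1 B1 A4 B4 h14
      | exact pairHV2 Va Vb hab E V1 V4 A1 B1 A4 B4 h14
      | exact pairVH2 Va Vb hab E V1 V4 A1 B1 A4 B4 h14
      | exact capHH2 Va Vb hab E V1 V5 A1 B1 A5 B5 h15
      | exact capVV2 Va Vb hab E V1 V5 A1 B1 A5 B5 h15
      | exact pairHV2 Va Vb hab E V1 V5 A1 B1 A5 B5 h15
      | exact pairVH2 Va Vb hab E V1 V5 A1 B1 A5 B5 h15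
      | exact capHH2 Va Vb hab E V2 V3 A2 B2 A3 B3 h23
      | exact capVV2 Va Vb hab E V2 V3 A2 B2 A3 B3 h23
      | exact pairHV2 Va Vb hab E V2 V3 A2 B2 A3 B3 h23
      | exact pairVH2 Va Vb hab E V2 V3 A2 B2 A3 B3 h23
      | exact capHH2 Va Vb hab E V2 V4 A2 B2 A4 B4 h24
      | exact capVV2 Va Vb hab E V2 V4 A2 B2 A4 B4 h24
      | exact pairHV2 Va Vb hab E V2 V4 A2 B2 A4 B4 h24
      | exact pairVH2 Va Vb hab E V2 V4 A2 B2 A4 B4 h24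
      | exact capHH2 Va Vb hab E V2 V5 A2 B2 A5 B5 h25
      | exact capVV2 Va Vb hab E V2 V5 A2 B2 A5 B5 h25
      | exact pairHV2 Va Vb hab E V2 V5 A2 B2 A5 B5 h25
      | exact pairVH2 Va Vb hab E V2 V5 A2 B2 A5 B5 h25
      | exact capHH2 Va Vb hab E V3 V4 A3 B3 A4 B4 h34
      | exact capVV2 Va Vb hab E V3 V4 A3 B3 A4 B4 h34
      | exact pairHV2 Va Vb hab E V3 V4 A3 B3 A4 B4 h34
      | exact pairVH2 Va Vb hab E V3 V4 A3 B3 A4 B4 h34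
      | exact capHH2 Va Vb hab E V3 V5 A3 B3 A5 B5 h35
      | exact capVV2 Va Vb hab E V3 V5 A3 B3 A5 B5 h35
      | exact pairHV2 Va Vb hab E V3 V5 A3 B3 A5 B5 h35
      | exact pairVH2 Va Vb hab E V3 V5 A3 B3 A5 B5 h35
      | exact capHH2 Va Vb hab E V4 V5 A4 B4 A5 B5 h45
      | exact capVV2 Va Vb hab E V4 V5 A4 B4 A5 B5 h45
      | exact pairHV2 Va Vb hab E V4 V5 A4 B4 A5 B5 h45
      | exact pairVH2 Va Vb hab E V4 V5 A4 B4 A5 B5 h45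


lemma hEdge_mem_midPath (i : ℤ) (c : ℕ) (hc : c < 2) : hEdge (2*i) (c : ℤ) ∈ (midPath i).edges := by
  rw [midPath_edges]
  have : c = 0 ∨ c = 1 := by omega
  rcases this with rfl | rfl
  · simp
  · simp

theorem hasTwoBend (n : ℕ) (hn : 5 ≤ n) :
    HasKBendRep (completeBipartiteGraph (Fin 2) (Fin n)) 2 := by
  refine ⟨Sum.elim (fun x : Fin 2 => segPathH 0 (x.val : ℤ) (2*n-1))
    (fun i : Fin n => midPath (i.val : ℤ)), ?_, ?_⟩
  · intro u v huv
    rcases u with x | i <;> rcases v with y | j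
    · constructor
      · intro h; simp at h
      · rintro ⟨e, he1, he2⟩
        exfalso
        simp only [Sum.elim_inl] at he1 he2
        rw [segPathH_edges] at he1 he2
        obtain ⟨t, ht1, ht2, rfl⟩ := he1
        obtain ⟨t', ht1', ht2', he⟩ := he2
        have hv : (x.val : ℤ) = y.val := (hEdge_inj.mp he).2
        have hxy : x = y := Fin.ext (by exact_mod_cast hv)
        exact huv (by rw [hxy])
    · constructor
      · intro _
        refine ⟨hEdge (2*(j.val:ℤ)) (x.val : ℤ), ?_, ?_⟩
        · simp only [Sum.elim_inl]
          rw [segPathH_edges]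
          refine ⟨2*(j.val:ℤ), by omega, ?_, rfl⟩
          have := j.isLt
          omega
        · simp only [Sum.elim_inr]
          exact hEdge_mem_midPath _ _ x.isLt
      · intro _; simp
    · constructor
      · intro _
        refine ⟨hEdge (2*(i.val:ℤ)) (y.val : ℤ), ?_, ?_⟩
        · simp only [Sum.elim_inr]
          exact hEdge_mem_midPath _ _ y.isLt
        · simp only [Sum.elim_inl]
          rw [segPathH_edges]
          refine ⟨2*(i.val:ℤ), by omega, ?_, rfl⟩
          have := i.isLt
          omega
      · intro _; simp
    · constructor
      · intro h; simp at h
      · rintro ⟨e, he1, he2⟩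
        exfalso
        simp only [Sum.elim_inr] at he1 he2
        rw [midPath_edges] at he1 he2
        have hij' : i.val ≠ j.val := fun h => huv (by rw [Fin.ext h])
        have hij : (i.val : ℤ) ≠ (j.val : ℤ) := by exact_mod_cast hij'
        simp only [List.mem_cons, List.not_mem_nil, or_false] at he1 he2
        rcases he1 with rfl | rfl | rfl <;> rcases he2 with he | he | he <;>
          first
            | (have := hEdge_inj.mp he; omega)
            | (have := vEdge_inj.mp he; omega)
            | exact hEdge_ne_vEdge he
            | exact hEdge_ne_vEdge he.symm
  · intro v
    rcases v with x | i
    · simp only [Sum.elim_inl, segPathH_bends]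
      omega
    · exact midPath_bends _

theorem noOneBend (n : ℕ) (hn : 5 ≤ n) :
    ¬ HasKBendRep (completeBipartiteGraph (Fin 2) (Fin n)) 1 := by
  rintro ⟨P, hrep, hb⟩
  obtain ⟨ca, da, pa, qa, ra, sa, Da⟩ := descOf_exists (P (Sum.inl 0)) (hb _)
  obtain ⟨cb, db, pb, qb, rb, sb, Db⟩ := descOf_exists (P (Sum.inl 1)) (hb _)
  obtain ⟨c1, d1, p1, q1, r1, s1, D1⟩ := descOf_exists (P (Sum.inr ⟨0, by omega⟩)) (hb _)
  obtain ⟨c2, d2, p2, q2, r2, s2, D2⟩ := descOf_exists (P (Sum.inr ⟨1, by omega⟩)) (hb _)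
  obtain ⟨c3, d3, p3, q3, r3, s3, D3⟩ := descOf_exists (P (Sum.inr ⟨2, by omega⟩)) (hb _)
  obtain ⟨c4, d4, p4, q4, r4, s4, D4⟩ := descOf_exists (P (Sum.inr ⟨3, by omega⟩)) (hb _)
  obtain ⟨c5, d5, p5, q5, r5, s5, D5⟩ := descOf_exists (P (Sum.inr ⟨4, by omega⟩)) (hb _)
  have hab : ¬ Meets ca da pa qa ra sa cb db pb qb rb sb := by
    rw [← meets_iff Da Db]
    rintro hsh
    have := (hrep (Sum.inl 0) (Sum.inl 1) (by simp)).mpr hsh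
    simp at this
  have h1a : Meets c1 d1 p1 q1 r1 s1 ca da pa qa ra sa := by
    rw [← meets_iff D1 Da]
    exact (hrep (Sum.inr ⟨0, by omega⟩) (Sum.inl 0) (by simp)).mp (by simp)
  have h1b : Meets c1 d1 p1 q1 r1 s1 cb db pb qb rb sb := by
    rw [← meets_iff D1 Db]
    exact (hrep (Sum.inr ⟨0, by omega⟩) (Sum.inl 1) (by simp)).mp (by simp)
  have h2a : Meets c2 d2 p2 q2 r2 s2 ca da pa qa ra sa := by
    rw [← meets_iff D2 Da]
    exact (hrep (Sum.inr ⟨1, by omega⟩) (Sum.inl 0) (by simp)).mp (by simp)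
  have h2b : Meets c2 d2 p2 q2 r2 s2 cb db pb qb rb sb := by
    rw [← meets_iff D2 Db]
    exact (hrep (Sum.inr ⟨1, by omega⟩) (Sum.inl 1) (by simp)).mp (by simp)
  have h3a : Meets c3 d3 p3 q3 r3 s3 ca da pa qa ra sa := by
    rw [← meets_iff D3 Da]
    exact (hrep (Sum.inr ⟨2, by omega⟩) (Sum.inl 0) (by simp)).mp (by simp)
  have h3b : Meets c3 d3 p3 q3 r3 s3 cb db pb qb rb sb := by
    rw [← meets_iff D3 Db]
    exact (hrep (Sum.inr ⟨2, by omega⟩) (Sum.inl 1) (by simp)).mp (by simp)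
  have h4a : Meets c4 d4 p4 q4 r4 s4 ca da pa qa ra sa := by
    rw [← meets_iff D4 Da]
    exact (hrep (Sum.inr ⟨3, by omega⟩) (Sum.inl 0) (by simp)).mp (by simp)
  have h4b : Meets c4 d4 p4 q4 r4 s4 cb db pb qb rb sb := by
    rw [← meets_iff D4 Db]
    exact (hrep (Sum.inr ⟨3, by omega⟩) (Sum.inl 1) (by simp)).mp (by simp)
  have h5a : Meets c5 d5 p5 q5 r5 s5 ca da pa qa ra sa := by
    rw [← meets_iff D5 Da]
    exact (hrep (Sum.inr ⟨4, by omega⟩) (Sum.inl 0) (by simp)).mp (by simp)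
  have h5b : Meets c5 d5 p5 q5 r5 s5 cb db pb qb rb sb := by
    rw [← meets_iff D5 Db]
    exact (hrep (Sum.inr ⟨4, by omega⟩) (Sum.inl 1) (by simp)).mp (by simp)
  have h12 : ¬ Meets c1 d1 p1 q1 r1 s1 c2 d2 p2 q2 r2 s2 := by
    rw [← meets_iff D1 D2]
    rintro hsh
    have := (hrep (Sum.inr ⟨0, by omega⟩) (Sum.inr ⟨1, by omega⟩) (by simp)).mpr hsh
    simp at this
  have h13 : ¬ Meets c1 d1 p1 q1 r1 s1 c3 d3 p3 q3 r3 s3 := by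
    rw [← meets_iff D1 D3]
    rintro hsh
    have := (hrep (Sum.inr ⟨0, by omega⟩) (Sum.inr ⟨2, by omega⟩) (by simp)).mpr hsh
    simp at this
  have h14 : ¬ Meets c1 d1 p1 q1 r1 s1 c4 d4 p4 q4 r4 s4 := by
    rw [← meets_iff D1 D4]
    rintro hsh
    have := (hrep (Sum.inr ⟨0, by omega⟩) (Sum.inr ⟨3, by omega⟩) (by simp)).mpr hsh
    simp at this
  have h15 : ¬ Meets c1 d1 p1 q1 r1 s1 c5 d5 p5 q5 r5 s5 := by
    rw [← meets_iff D1 D5]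
    rintro hsh
    have := (hrep (Sum.inr ⟨0, by omega⟩) (Sum.inr ⟨4, by omega⟩) (by simp)).mpr hsh
    simp at this
  have h23 : ¬ Meets c2 d2 p2 q2 r2 s2 c3 d3 p3 q3 r3 s3 := by
    rw [← meets_iff D2 D3]
    rintro hsh
    have := (hrep (Sum.inr ⟨1, by omega⟩) (Sum.inr ⟨2, by omega⟩) (by simp)).mpr hsh
    simp at this
  have h24 : ¬ Meets c2 d2 p2 q2 r2 s2 c4 d4 p4 q4 r4 s4 := by
    rw [← meets_iff D2 D4]
    rintro hsh
    have := (hrep (Sum.inr ⟨1, by omega⟩) (Sum.inr ⟨3, by omega⟩) (by simp)).mpr hsh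
    simp at this
  have h25 : ¬ Meets c2 d2 p2 q2 r2 s2 c5 d5 p5 q5 r5 s5 := by
    rw [← meets_iff D2 D5]
    rintro hsh
    have := (hrep (Sum.inr ⟨1, by omega⟩) (Sum.inr ⟨4, by omega⟩) (by simp)).mpr hsh
    simp at this
  have h34 : ¬ Meets c3 d3 p3 q3 r3 s3 c4 d4 p4 q4 r4 s4 := by
    rw [← meets_iff D3 D4]
    rintro hsh
    have := (hrep (Sum.inr ⟨2, by omega⟩) (Sum.inr ⟨3, by omega⟩) (by simp)).mpr hsh
    simp at this
  have h35 : ¬ Meets c3 d3 p3 q3 r3 s3 c5 d5 p5 q5 r5 s5 := by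
    rw [← meets_iff D3 D5]
    rintro hsh
    have := (hrep (Sum.inr ⟨2, by omega⟩) (Sum.inr ⟨4, by omega⟩) (by simp)).mpr hsh
    simp at this
  have h45 : ¬ Meets c4 d4 p4 q4 r4 s4 c5 d5 p5 q5 r5 s5 := by
    rw [← meets_iff D4 D5]
    rintro hsh
    have := (hrep (Sum.inr ⟨3, by omega⟩) (Sum.inr ⟨4, by omega⟩) (by simp)).mpr hsh
    simp at this
  exact core Da.1 Db.1 D1.1 D2.1 D3.1 D4.1 D5.1 hab h1a h1b h2a h2b h3a h3b h4a h4b h5a h5b h12 h13 h14 h15 h23 h24 h25 h34 h35 h45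


/-- For every `n ≥ 5`, the complete bipartite graph `K_{2,n}` has bend-number exactly 2. -/
theorem bendNumber_completeBipartite_two (n : ℕ) (hn : 5 ≤ n) :
    bendNumber (completeBipartiteGraph (Fin 2) (Fin n)) = 2 := by
  have h2 := hasTwoBend n hn
  have h1 := noOneBend n hn
  apply le_antisymm
  · exact Nat.sInf_le h2
  · refine le_csInf ⟨2, h2⟩ ?_
    intro k hk
    by_contra hlt
    push_neg at hlt
    have hk1 : k ≤ 1 := by omega
    obtain ⟨Q, hrep, hbnd⟩ := hk
    exact h1 ⟨Q, hrep, fun v => le_trans (hbnd v) hk1⟩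
end

section
/- In any rectangle representation of a plane near-triangulation, every inner triangular face {u,v,w} corresponds to a unique point of the plane, namely the single point of the common intersection R(u) ∩ R(v) ∩ R(w). -/
/-- The list of boundary edges of a face given as a cyclic vertex list. -/
def cycleEdges {V : Type} (f : List V) : List (Sym2 V) :=
  (f.zip (f.rotate 1)).map (fun p => Sym2.mk p.1 p.2)

/-- A combinatorial plane embedding of a 2-connected-like plane graph:
faces are boundary cycles, every edge lies on exactly two faces, and Euler's formula holds. -/
structure PlaneGraphData (V : Type) [Fintype V] [DecidableEq V] where
  G : SimpleGraph V
  faces : Finset (List V)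
  outer : List V
  outer_mem : outer ∈ faces
  face_cycle : ∀ f ∈ faces, f.Nodup ∧ 3 ≤ f.length ∧ ∀ e ∈ cycleEdges f, e ∈ G.edgeSet
  edge_two_faces : ∀ e ∈ G.edgeSet, (faces.filter (fun f => e ∈ cycleEdges f)).card = 2
  connected : G.Connected
  euler : Fintype.card V + faces.card = G.edgeSet.ncard + 2

/-- `{a,b,c}` is a separating triangle of `G`. -/
def SepTriangle {V : Type} (G : SimpleGraph V) (a b c : V) : Prop :=
  G.Adj a b ∧ G.Adj b c ∧ G.Adj a c ∧
    ¬ (G.induce {v | v ≠ a ∧ v ≠ b ∧ v ≠ c}).Preconnected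

/-- A plane non-separating near-triangulation: at least 4 vertices, no separating
triangle, all inner faces triangles, outer face a quadrangle. -/
def IsNST {V : Type} [Fintype V] [DecidableEq V] (P : PlaneGraphData V) : Prop :=
  4 ≤ Fintype.card V ∧
  (∀ a b c : V, ¬ SepTriangle P.G a b c) ∧
  (∀ f ∈ P.faces, f ≠ P.outer → f.length = 3) ∧
  P.outer.length = 4

/-- An axis-aligned rectangle (product of two nondegenerate closed intervals). -/
structure Rect where
  x1 : ℝ
  x2 : ℝ
  y1 : ℝ
  y2 : ℝ
  hx : x1 < x2
  hy : y1 < y2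

/-- The closed rectangle as a subset of the plane. -/
def Rect.set (R : Rect) : Set (ℝ × ℝ) := Set.Icc R.x1 R.x2 ×ˢ Set.Icc R.y1 R.y2

/-- The open interior of the rectangle. -/
def Rect.inter (R : Rect) : Set (ℝ × ℝ) := Set.Ioo R.x1 R.x2 ×ˢ Set.Ioo R.y1 R.y2

/-- A rectangle representation of a plane graph: pairwise disjoint interiors, any two
rectangles disjoint or meeting in a segment of positive length, and contact iff adjacency. -/
def IsRectRep {V : Type} [Fintype V] [DecidableEq V] (P : PlaneGraphData V)
    (R : V → Rect) : Prop :=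
  (∀ v w : V, v ≠ w → Disjoint (R v).inter (R w).inter) ∧
  (∀ v w : V, v ≠ w → (R v).set ∩ (R w).set = ∅ ∨
    ∃ p q : ℝ × ℝ, p ≠ q ∧ (R v).set ∩ (R w).set = segment ℝ p q) ∧
  (∀ v w : V, v ≠ w → (((R v).set ∩ (R w).set).Nonempty ↔ P.G.Adj v w))

lemma pair_disj (S T : Rect) (h : Disjoint S.inter T.inter) :
    T.x2 ≤ S.x1 ∨ S.x2 ≤ T.x1 ∨ T.y2 ≤ S.y1 ∨ S.y2 ≤ T.y1 := by
  by_contra hc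
  push_neg at hc
  obtain ⟨h1, h2, h3, h4⟩ := hc
  set x0 : ℝ := (max S.x1 T.x1 + min S.x2 T.x2) / 2 with hx0
  set y0 : ℝ := (max S.y1 T.y1 + min S.y2 T.y2) / 2 with hy0
  have hxm : max S.x1 T.x1 < min S.x2 T.x2 := max_lt (lt_min S.hx h1) (lt_min h2 T.hx)
  have hym : max S.y1 T.y1 < min S.y2 T.y2 := max_lt (lt_min S.hy h3) (lt_min h4 T.hy)
  have hm1 : le_max_left S.x1 T.x1 = le_max_left S.x1 T.x1 := rfl
  have m1 : (x0, y0) ∈ S.inter := by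
    constructor <;> constructor
    · have := le_max_left S.x1 T.x1; simp only [hx0]; linarith
    · have := min_le_left S.x2 T.x2; simp only [hx0]; linarith
    · have := le_max_left S.y1 T.y1; simp only [hy0]; linarith
    · have := min_le_left S.y2 T.y2; simp only [hy0]; linarith
  have m2 : (x0, y0) ∈ T.inter := by
    constructor <;> constructor
    · have := le_max_right S.x1 T.x1; simp only [hx0]; linarith
    · have := min_le_right S.x2 T.x2; simp only [hx0]; linarith
    · have := le_max_right S.y1 T.y1; simp only [hy0]; linarith
    · have := min_le_right S.y2 T.y2; simp only [hy0]; linarith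
  exact Set.disjoint_left.mp h m1 m2

lemma stack3 (c1 d1 c2 d2 c3 d3 : ℝ) (h1 : c1 < d1) (h2 : c2 < d2) (h3 : c3 < d3)
    (n12 : c1 ≤ d2) (n21 : c2 ≤ d1) (n13 : c1 ≤ d3) (n31 : c3 ≤ d1)
    (n23 : c2 ≤ d3) (n32 : c3 ≤ d2)
    (e12 : d2 ≤ c1 ∨ d1 ≤ c2) (e13 : d3 ≤ c1 ∨ d1 ≤ c3)
    (e23 : d3 ≤ c2 ∨ d2 ≤ c3) : False := by
  rcases e12 with h|h <;> rcases e13 with h'|h' <;> rcases e23 with h''|h'' <;> linarith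

lemma triple_point (R1 R2 R3 : Rect)
    (d12 : Disjoint R1.inter R2.inter) (d13 : Disjoint R1.inter R3.inter)
    (d23 : Disjoint R2.inter R3.inter)
    (n12 : (R1.set ∩ R2.set).Nonempty) (n13 : (R1.set ∩ R3.set).Nonempty)
    (n23 : (R2.set ∩ R3.set).Nonempty) :
    ∃ p : ℝ × ℝ, R1.set ∩ R2.set ∩ R3.set = {p} := by
  obtain ⟨p, hp1, hp2⟩ := n12
  obtain ⟨q, hq1, hq3⟩ := n13
  obtain ⟨r, hr2, hr3⟩ := n23
  simp only [Rect.set, Set.mem_prod, Set.mem_Icc] at hp1 hp2 hq1 hq3 hr2 hr3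
  obtain ⟨⟨pa1, pb1⟩, pc1, pd1⟩ := hp1
  obtain ⟨⟨pa2, pb2⟩, pc2, pd2⟩ := hp2
  obtain ⟨⟨qa1, qb1⟩, qc1, qd1⟩ := hq1
  obtain ⟨⟨qa3, qb3⟩, qc3, qd3⟩ := hq3
  obtain ⟨⟨ra2, rb2⟩, rc2, rd2⟩ := hr2
  obtain ⟨⟨ra3, rb3⟩, rc3, rd3⟩ := hr3
  have x12 : R1.x1 ≤ R2.x2 := by linarith
  have x21 : R2.x1 ≤ R1.x2 := by linarith
  have x13 : R1.x1 ≤ R3.x2 := by linarith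
  have x31 : R3.x1 ≤ R1.x2 := by linarith
  have x23 : R2.x1 ≤ R3.x2 := by linarith
  have x32 : R3.x1 ≤ R2.x2 := by linarith
  have y12 : R1.y1 ≤ R2.y2 := by linarith
  have y21 : R2.y1 ≤ R1.y2 := by linarith
  have y13 : R1.y1 ≤ R3.y2 := by linarith
  have y31 : R3.y1 ≤ R1.y2 := by linarith
  have y23 : R2.y1 ≤ R3.y2 := by linarith
  have y32 : R3.y1 ≤ R2.y2 := by linarith
  set A := max (max R1.x1 R2.x1) R3.x1 with hA
  set B := min (min R1.x2 R2.x2) R3.x2 with hB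
  set C := max (max R1.y1 R2.y1) R3.y1 with hC
  set D := min (min R1.y2 R2.y2) R3.y2 with hD
  have hAB : A ≤ B :=
    max_le (max_le (le_min (le_min R1.hx.le x12) x13) (le_min (le_min x21 R2.hx.le) x23))
      (le_min (le_min x31 x32) R3.hx.le)
  have hCD : C ≤ D :=
    max_le (max_le (le_min (le_min R1.hy.le y12) y13) (le_min (le_min y21 R2.hy.le) y23))
      (le_min (le_min y31 y32) R3.hy.le)
  have a1A : R1.x1 ≤ A := le_trans (le_max_left _ _) (le_max_left _ _)
  have a2A : R2.x1 ≤ A := le_trans (le_max_right _ _) (le_max_left _ _)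
  have a3A : R3.x1 ≤ A := le_max_right _ _
  have b1B : B ≤ R1.x2 := le_trans (min_le_left _ _) (min_le_left _ _)
  have b2B : B ≤ R2.x2 := le_trans (min_le_left _ _) (min_le_right _ _)
  have b3B : B ≤ R3.x2 := min_le_right _ _
  have c1C : R1.y1 ≤ C := le_trans (le_max_left _ _) (le_max_left _ _)
  have c2C : R2.y1 ≤ C := le_trans (le_max_right _ _) (le_max_left _ _)
  have c3C : R3.y1 ≤ C := le_max_right _ _
  have d1D : D ≤ R1.y2 := le_trans (min_le_left _ _) (min_le_left _ _)
  have d2D : D ≤ R2.y2 := le_trans (min_le_left _ _) (min_le_right _ _)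
  have d3D : D ≤ R3.y2 := min_le_right _ _
  have hAeqB : A = B := by
    refine le_antisymm hAB (le_of_not_gt fun hlt => ?_)
    have e12 : R2.y2 ≤ R1.y1 ∨ R1.y2 ≤ R2.y1 := by
      rcases pair_disj R1 R2 d12 with h|h|h|h
      · exact absurd h (by linarith)
      · exact absurd h (by linarith)
      · exact Or.inl h
      · exact Or.inr h
    have e13 : R3.y2 ≤ R1.y1 ∨ R1.y2 ≤ R3.y1 := by
      rcases pair_disj R1 R3 d13 with h|h|h|h
      · exact absurd h (by linarith)
      · exact absurd h (by linarith)
      · exact Or.inl h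
      · exact Or.inr h
    have e23 : R3.y2 ≤ R2.y1 ∨ R2.y2 ≤ R3.y1 := by
      rcases pair_disj R2 R3 d23 with h|h|h|h
      · exact absurd h (by linarith)
      · exact absurd h (by linarith)
      · exact Or.inl h
      · exact Or.inr h
    exact stack3 R1.y1 R1.y2 R2.y1 R2.y2 R3.y1 R3.y2 R1.hy R2.hy R3.hy
      y12 y21 y13 y31 y23 y32 e12 e13 e23
  have hCeqD : C = D := by
    refine le_antisymm hCD (le_of_not_gt fun hlt => ?_)
    have e12 : R2.x2 ≤ R1.x1 ∨ R1.x2 ≤ R2.x1 := by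
      rcases pair_disj R1 R2 d12 with h|h|h|h
      · exact Or.inl h
      · exact Or.inr h
      · exact absurd h (by linarith)
      · exact absurd h (by linarith)
    have e13 : R3.x2 ≤ R1.x1 ∨ R1.x2 ≤ R3.x1 := by
      rcases pair_disj R1 R3 d13 with h|h|h|h
      · exact Or.inl h
      · exact Or.inr h
      · exact absurd h (by linarith)
      · exact absurd h (by linarith)
    have e23 : R3.x2 ≤ R2.x1 ∨ R2.x2 ≤ R3.x1 := by
      rcases pair_disj R2 R3 d23 with h|h|h|h
      · exact Or.inl h
      · exact Or.inr h
      · exact absurd h (by linarith)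
      · exact absurd h (by linarith)
    exact stack3 R1.x1 R1.x2 R2.x1 R2.x2 R3.x1 R3.x2 R1.hx R2.hx R3.hx
      x12 x21 x13 x31 x23 x32 e12 e13 e23
  refine ⟨(A, C), ?_⟩
  ext ⟨x, y⟩
  simp only [Set.mem_inter_iff, Rect.set, Set.mem_prod, Set.mem_Icc,
    Set.mem_singleton_iff, Prod.mk.injEq]
  constructor
  · rintro ⟨⟨⟨⟨hx1, hx1'⟩, hy1, hy1'⟩, ⟨hx2, hx2'⟩, hy2, hy2'⟩, ⟨hx3, hx3'⟩, hy3, hy3'⟩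
    have hxA : A ≤ x := max_le (max_le hx1 hx2) hx3
    have hxB : x ≤ B := le_min (le_min hx1' hx2') hx3'
    have hyC : C ≤ y := max_le (max_le hy1 hy2) hy3
    have hyD : y ≤ D := le_min (le_min hy1' hy2') hy3'
    exact ⟨le_antisymm (hAeqB ▸ hxB) hxA, le_antisymm (hCeqD ▸ hyD) hyC⟩
  · rintro ⟨rfl, rfl⟩
    refine ⟨⟨⟨⟨a1A, ?_⟩, c1C, ?_⟩, ⟨a2A, ?_⟩, c2C, ?_⟩, ⟨a3A, ?_⟩, c3C, ?_⟩ <;>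
      first
        | (rw [hAeqB]; assumption)
        | (rw [hCeqD]; assumption)

/-- In any rectangle representation of a plane near-triangulation, each inner
(triangular) face corresponds to a unique point, the single point of the common
intersection of its three rectangles. -/
theorem inner_face_single_point
    {V : Type} [Fintype V] [DecidableEq V] (P : PlaneGraphData V)
    (hnt : ∀ f ∈ P.faces, f ≠ P.outer → f.length = 3)
    (R : V → Rect) (hR : IsRectRep P R) :
    ∀ f ∈ P.faces, f ≠ P.outer → ∀ u v w : V, f = [u, v, w] →
      ∃ p : ℝ × ℝ, (R u).set ∩ (R v).set ∩ (R w).set = {p} := by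
  intro f hf hfo u v w hfuvw
  subst hfuvw
  obtain ⟨hnd, -, hedges⟩ := P.face_cycle _ hf
  simp [List.nodup_cons] at hnd
  obtain ⟨⟨huv, huw⟩, hvw⟩ := hnd
  have hce : cycleEdges [u, v, w] = [s(u,v), s(v,w), s(w,u)] := by
    simp [cycleEdges, List.rotate]
  have auv : P.G.Adj u v := by
    have := hedges s(u,v) (by rw [hce]; simp)
    rwa [SimpleGraph.mem_edgeSet] at this
  have avw : P.G.Adj v w := by
    have := hedges s(v,w) (by rw [hce]; simp)
    rwa [SimpleGraph.mem_edgeSet] at this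
  have awu : P.G.Adj w u := by
    have := hedges s(w,u) (by rw [hce]; simp)
    rwa [SimpleGraph.mem_edgeSet] at this
  obtain ⟨hdisj, -, hcontact⟩ := hR
  exact triple_point (R u) (R v) (R w)
    (hdisj u v huv) (hdisj u w huw) (hdisj v w hvw)
    ((hcontact u v huv).mpr auv)
    ((hcontact u w huw).mpr (awu.symm))
    ((hcontact v w hvw).mpr avw)
end
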